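/- arXiv:1510.00315 — 5 statements merged into one kernel-verified Lean document; each statement's English description precedes it below -/
import Mathlib

section
/- Let p : (0,1) → ℝ be a measurable probability density on (0,1) (p ≥ 0 and ∫₀¹ p(β) dβ = 1). For every t > 0, the scaled tail probabilities of the rescaled waiting times converge: lim_{n→∞} n · ∫₀¹ min(1, n^{-1} t^{-β}) p(β) dβ = ∫₀¹ t^{-β} p(β) dβ, and the limit is finite. -/
open MeasureTheory Filter Set

/-- For a probability density `p` on `(0,1)`, the scaled tail
probabilities of the rescaled waiting times converge: for every `t > 0`,
`n · ∫₀¹ min(1, n⁻¹ t^(-β)) p β dβ → ∫₀¹ t^(-β) p β dβ` as `n → ∞`,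
and the limit is finite. -/
theorem scaled_tail_convergence
    (p : ℝ → ℝ) (hpmeas : Measurable p)
    (hp0 : ∀ β ∈ Ioo (0:ℝ) 1, 0 ≤ p β)
    (hp1 : ∫ β in Ioo (0:ℝ) 1, p β = 1)
    (t : ℝ) (ht : 0 < t) :
    Tendsto (fun n : ℕ => (n : ℝ) * ∫ β in Ioo (0:ℝ) 1, min 1 ((n : ℝ)⁻¹ * t ^ (-β)) * p β)
      atTop (nhds (∫ β in Ioo (0:ℝ) 1, t ^ (-β) * p β)) ∧
    IntegrableOn (fun β => t ^ (-β) * p β) (Ioo (0:ℝ) 1) := by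
  have hrmeas : Measurable fun β : ℝ => t ^ (-β) :=
    (continuous_const.rpow continuous_neg fun x => Or.inl ht.ne').measurable
  -- p is integrable on (0,1) since its integral is nonzero
  have hpint : IntegrableOn p (Ioo (0:ℝ) 1) := by
    by_contra h
    rw [integral_undef h] at hp1
    norm_num at hp1
  -- t^(-β) is bounded on (0,1)
  set C : ℝ := max 1 t⁻¹ with hC
  have hbnd : ∀ β ∈ Ioo (0:ℝ) 1, t ^ (-β) ≤ C := by
    intro β hβ
    rcases le_or_gt 1 t with h1 | h1
    · refine le_trans ?_ (le_max_left _ _)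
      calc t ^ (-β) ≤ t ^ (0:ℝ) :=
            Real.rpow_le_rpow_of_exponent_le h1 (by linarith [hβ.1])
        _ = 1 := Real.rpow_zero t
    · refine le_trans ?_ (le_max_right _ _)
      calc t ^ (-β) ≤ t ^ (-1:ℝ) :=
            Real.rpow_le_rpow_of_exponent_ge ht h1.le (by linarith [hβ.2])
        _ = t⁻¹ := by rw [Real.rpow_neg_one]
  -- integrability of the limit function
  have hfint : IntegrableOn (fun β => t ^ (-β) * p β) (Ioo (0:ℝ) 1) := by
    refine Integrable.mono' (hpint.const_mul C) ((hrmeas.mul hpmeas).aestronglyMeasurable) ?_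
    filter_upwards [ae_restrict_mem measurableSet_Ioo] with β hβ
    rw [Real.norm_eq_abs, abs_of_nonneg (mul_nonneg (Real.rpow_nonneg ht.le _) (hp0 β hβ))]
    exact mul_le_mul_of_nonneg_right (hbnd β hβ) (hp0 β hβ)
  refine ⟨?_, hfint⟩
  -- rewrite n * ∫ ... = ∫ min n (t^(-β)) * p β
  have key : ∀ n : ℕ,
      (n : ℝ) * ∫ β in Ioo (0:ℝ) 1, min 1 ((n : ℝ)⁻¹ * t ^ (-β)) * p β
      = ∫ β in Ioo (0:ℝ) 1, min (n : ℝ) (t ^ (-β)) * p β := by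
    intro n
    rw [← integral_const_mul]
    congr 1
    ext β
    rcases Nat.eq_zero_or_pos n with h | h
    · simp [h, min_eq_left (Real.rpow_nonneg ht.le (-β))]
    · have hn : (0:ℝ) < n := Nat.cast_pos.mpr h
      rw [← mul_assoc, mul_min_of_nonneg _ _ hn.le, mul_one, ← mul_assoc,
        mul_inv_cancel₀ hn.ne', one_mul]
  simp only [key]
  -- dominated convergence
  refine tendsto_integral_of_dominated_convergence (fun β => t ^ (-β) * p β)
    (fun n => ((measurable_const.min hrmeas).mul hpmeas).aestronglyMeasurable)
    hfint ?_ ?_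
  · intro n
    filter_upwards [ae_restrict_mem measurableSet_Ioo] with β hβ
    have h1 : 0 ≤ min (n:ℝ) (t ^ (-β)) :=
      le_min (Nat.cast_nonneg n) (Real.rpow_nonneg ht.le _)
    rw [Real.norm_eq_abs, abs_of_nonneg (mul_nonneg h1 (hp0 β hβ))]
    exact mul_le_mul_of_nonneg_right (min_le_right _ _) (hp0 β hβ)
  · filter_upwards [] with β
    have : ∀ᶠ n : ℕ in atTop, min (n:ℝ) (t ^ (-β)) * p β = t ^ (-β) * p β := by
      have := (tendsto_natCast_atTop_atTop (R := ℝ)).eventually_ge_atTop (t ^ (-β))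
      filter_upwards [this] with n hn
      rw [min_eq_right hn]
    exact Tendsto.congr' (this.mono fun n hn => hn.symm) tendsto_const_nhds
end

section
/- Let p : (0,1) → ℝ be a measurable probability density on (0,1) (p ≥ 0 and ∫₀¹ p(β) dβ = 1), and let k(t) = ∫₀¹ β t^{-β-1} p(β) dβ for t > 0. Then ∫₀^∞ min(1, t²) k(t) dt = ∫₀¹ (β/(2−β) + 1) p(β) dβ ≤ 2; in particular the measure ν(dt) = k(t) dt on (0,∞) satisfies the Lévy-measure integrability condition ∫₀^∞ min(1, t²) ν(dt) < ∞. -/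
open MeasureTheory Set Function

lemma aux_inner {β : ℝ} (hβ : β ∈ Ioo (0:ℝ) 1) :
    IntegrableOn (fun t => min 1 (t^2) * (β * t ^ (-β-1))) (Ioi (0:ℝ)) ∧
    ∫ t in Ioi (0:ℝ), min 1 (t^2) * (β * t ^ (-β-1)) = β/(2-β) + 1 := by
  obtain ⟨hβ0, hβ1⟩ := hβ
  have h2β : (0:ℝ) < 2 - β := by linarith
  have heq1 : ∀ t ∈ Ioc (0:ℝ) 1, min 1 (t^2) * (β * t ^ (-β-1)) = β * t ^ (1-β) := by
    intro t ht
    have ht0 : (0:ℝ) < t := ht.1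
    have hmin : min 1 (t^2) = t^2 := by
      rw [min_eq_right]; nlinarith [ht.2, ht0.le]
    rw [hmin]
    have : t ^ (2:ℕ) * t ^ (-β-1) = t ^ (1-β) := by
      rw [← Real.rpow_natCast t 2, ← Real.rpow_add ht0]
      norm_num
      congr 1
      ring
    calc t^2 * (β * t ^ (-β-1)) = β * (t^2 * t ^ (-β-1)) := by ring
      _ = β * t ^ (1-β) := by rw [this]
  have heq2 : ∀ t ∈ Ioi (1:ℝ), min 1 (t^2) * (β * t ^ (-β-1)) = β * t ^ (-β-1) := by
    intro t ht
    have ht1 : (1:ℝ) < t := ht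
    have : min 1 (t^2) = 1 := by
      rw [min_eq_left]; nlinarith
    rw [this, one_mul]
  have hint1 : IntegrableOn (fun t => β * t ^ (1-β)) (Ioc (0:ℝ) 1) := by
    have := (intervalIntegral.intervalIntegrable_rpow' (a := 0) (b := 1)
      (r := 1 - β) (by linarith)).const_mul β
    rwa [intervalIntegrable_iff_integrableOn_Ioc_of_le zero_le_one] at this
  have hint2 : IntegrableOn (fun t => β * t ^ (-β-1)) (Ioi (1:ℝ)) := by
    exact (integrableOn_Ioi_rpow_of_lt (by linarith) one_pos).const_mul β
  have hIOn1 : IntegrableOn (fun t => min 1 (t^2) * (β * t ^ (-β-1))) (Ioc (0:ℝ) 1) :=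
    hint1.congr_fun (fun t ht => (heq1 t ht).symm) measurableSet_Ioc
  have hIOn2 : IntegrableOn (fun t => min 1 (t^2) * (β * t ^ (-β-1))) (Ioi (1:ℝ)) :=
    hint2.congr_fun (fun t ht => (heq2 t ht).symm) measurableSet_Ioi
  have hunion : Ioc (0:ℝ) 1 ∪ Ioi 1 = Ioi 0 := Ioc_union_Ioi_eq_Ioi zero_le_one
  have hdisj : Disjoint (Ioc (0:ℝ) 1) (Ioi 1) := by
    simp [Set.disjoint_left]
  have hIOn : IntegrableOn (fun t => min 1 (t^2) * (β * t ^ (-β-1))) (Ioi (0:ℝ)) := by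
    rw [← hunion]; exact hIOn1.union hIOn2
  refine ⟨hIOn, ?_⟩
  rw [← hunion, setIntegral_union hdisj measurableSet_Ioi hIOn1 hIOn2]
  have hI1 : ∫ t in Ioc (0:ℝ) 1, min 1 (t^2) * (β * t ^ (-β-1)) = β / (2-β) := by
    rw [setIntegral_congr_fun measurableSet_Ioc heq1,
      ← intervalIntegral.integral_of_le zero_le_one]
    rw [intervalIntegral.integral_const_mul, integral_rpow (Or.inl (by linarith))]
    rw [Real.one_rpow, Real.zero_rpow (by linarith), sub_zero,
      show (1:ℝ) - β + 1 = 2 - β by ring, mul_one_div]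
  have hI2 : ∫ t in Ioi (1:ℝ), min 1 (t^2) * (β * t ^ (-β-1)) = 1 := by
    rw [setIntegral_congr_fun measurableSet_Ioi heq2, integral_const_mul,
      integral_Ioi_rpow_of_lt (by linarith) one_pos]
    rw [Real.one_rpow]
    rw [show -β - 1 + 1 = -β by ring]
    field_simp
  rw [hI1, hI2]

/-- For a probability density `p` on `(0,1)` and
`k t = ∫₀¹ β t^(-β-1) p β dβ`, we have
`∫₀^∞ min(1, t²) k t dt = ∫₀¹ (β/(2−β) + 1) p β dβ ≤ 2`; in particular the measure
`ν(dt) = k t dt` satisfies the Lévy-measure integrability condition. -/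
theorem distributed_order_levy_measure_integrability
    (p : ℝ → ℝ) (hpmeas : Measurable p)
    (hp0 : ∀ β ∈ Ioo (0:ℝ) 1, 0 ≤ p β)
    (hp1 : ∫ β in Ioo (0:ℝ) 1, p β = 1)
    (k : ℝ → ℝ) (hk : ∀ t, k t = ∫ β in Ioo (0:ℝ) 1, β * t ^ (-β - 1) * p β) :
    (∫ t in Ioi (0:ℝ), min 1 (t ^ 2) * k t)
      = ∫ β in Ioo (0:ℝ) 1, (β / (2 - β) + 1) * p β ∧
    (∫ β in Ioo (0:ℝ) 1, (β / (2 - β) + 1) * p β) ≤ 2 ∧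
    IntegrableOn (fun t => min 1 (t ^ 2) * k t) (Ioi (0:ℝ)) := by
  set μ := volume.restrict (Ioi (0:ℝ)) with hμ
  set ν := volume.restrict (Ioo (0:ℝ) 1) with hν
  -- p is integrable (otherwise its integral would be 0, not 1)
  have hpInt : IntegrableOn p (Ioo (0:ℝ) 1) := by
    by_contra h
    rw [integral_undef h] at hp1
    norm_num at hp1
  -- basic facts about g β = β/(2-β)+1 on (0,1)
  have hg : ∀ β ∈ Ioo (0:ℝ) 1, 0 ≤ β / (2 - β) + 1 ∧ β / (2 - β) + 1 ≤ 2 := by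
    intro β hβ
    obtain ⟨hβ0, hβ1⟩ := hβ
    have h2β : (0:ℝ) < 2 - β := by linarith
    constructor
    · have := div_nonneg hβ0.le h2β.le; linarith
    · have : β / (2 - β) ≤ 1 := by
        rw [div_le_one h2β]; linarith
      linarith
  -- g·p is integrable
  have hgpmeas : Measurable fun β => (β / (2 - β) + 1) * p β := by
    exact ((measurable_id.div (measurable_const.sub measurable_id)).add
      measurable_const).mul hpmeas
  have hgp_int : IntegrableOn (fun β => (β / (2 - β) + 1) * p β) (Ioo (0:ℝ) 1) := by
    refine Integrable.mono (hpInt.const_mul 2) hgpmeas.aestronglyMeasurable ?_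
    rw [ae_restrict_iff' measurableSet_Ioo]
    filter_upwards with β hβ
    obtain ⟨hg0, hg2⟩ := hg β hβ
    have hp := hp0 β hβ
    rw [Real.norm_eq_abs, Real.norm_eq_abs, abs_of_nonneg (mul_nonneg hg0 hp),
      abs_of_nonneg (by linarith : (0:ℝ) ≤ 2 * p β)]
    nlinarith
  -- the inequality
  have hle2 : (∫ β in Ioo (0:ℝ) 1, (β / (2 - β) + 1) * p β) ≤ 2 := by
    have hmono : (∫ β in Ioo (0:ℝ) 1, (β / (2 - β) + 1) * p β)
        ≤ ∫ β in Ioo (0:ℝ) 1, 2 * p β := by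
      refine integral_mono_ae hgp_int (hpInt.const_mul 2) ?_
      rw [Filter.EventuallyLE, ae_restrict_iff' measurableSet_Ioo]
      filter_upwards with β hβ
      obtain ⟨hg0, hg2⟩ := hg β hβ
      have hp := hp0 β hβ
      nlinarith
    rw [integral_const_mul, hp1] at hmono
    linarith
  -- the kernel function on the product
  set F : ℝ → ℝ → ℝ := fun t β => min 1 (t ^ 2) * (β * t ^ (-β - 1) * p β) with hF
  have hFmeas : AEStronglyMeasurable (uncurry F) (μ.prod ν) := by
    have : Measurable (uncurry F) := by
      apply Measurable.mul
      · exact measurable_const.min ((measurable_fst).pow_const 2)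
      · refine Measurable.mul (Measurable.mul ?_ ?_) (hpmeas.comp measurable_snd)
        · exact measurable_snd
        · exact Measurable.pow measurable_fst
            (((measurable_snd : Measurable fun q : ℝ × ℝ => q.2).neg).sub measurable_const)
    exact this.aestronglyMeasurable
  -- for fixed β, reassociate F
  have hFre : ∀ β : ℝ, (fun t => F t β)
      = fun t => (min 1 (t ^ 2) * (β * t ^ (-β - 1))) * p β := by
    intro β; funext t; simp only [hF]; ring
  -- integrability on the product
  have hFint : Integrable (uncurry F) (μ.prod ν) := by
    rw [integrable_prod_iff' hFmeas]
    constructor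
    · rw [hν]
      filter_upwards [ae_restrict_mem measurableSet_Ioo] with β hβ
      have : (fun t => uncurry F (t, β)) = fun t => (min 1 (t ^ 2) * (β * t ^ (-β - 1))) * p β := by
        funext t; simp only [uncurry, hF]; ring
      rw [this, hμ]
      exact ((aux_inner hβ).1.mul_const (p β))
    · have hcongr : (fun β => (β / (2 - β) + 1) * p β)
          =ᵐ[ν] fun β => ∫ t, ‖uncurry F (t, β)‖ ∂μ := by
        rw [hν, Filter.EventuallyEq, ae_restrict_iff' measurableSet_Ioo]
        filter_upwards with β hβ
        have hnorm : ∀ t ∈ Ioi (0:ℝ), ‖uncurry F (t, β)‖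
            = (min 1 (t ^ 2) * (β * t ^ (-β - 1))) * p β := by
          intro t ht
          have ht0 : (0:ℝ) < t := ht
          have h1 : (0:ℝ) ≤ min 1 (t ^ 2) := le_min zero_le_one (sq_nonneg t)
          have h2 : (0:ℝ) ≤ β * t ^ (-β - 1) :=
            mul_nonneg hβ.1.le (Real.rpow_nonneg ht0.le _)
          have h3 := hp0 β hβ
          simp only [uncurry, hF]
          rw [Real.norm_eq_abs, abs_of_nonneg (mul_nonneg h1 (mul_nonneg h2 h3))]
          ring
        rw [hμ, setIntegral_congr_fun measurableSet_Ioi hnorm, integral_mul_const,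
          (aux_inner hβ).2]
      exact hgp_int.congr hcongr
  -- pull the minimum inside the integral defining k
  have keq : ∀ t : ℝ, min 1 (t ^ 2) * k t = ∫ β, F t β ∂ν := by
    intro t
    rw [hk t, hν, ← integral_const_mul]
  -- inner t-integral for a.e. β
  have hinner : ∀ β ∈ Ioo (0:ℝ) 1, (∫ t, F t β ∂μ) = (β / (2 - β) + 1) * p β := by
    intro β hβ
    rw [hFre β, hμ, integral_mul_const, (aux_inner hβ).2]
  refine ⟨?_, hle2, ?_⟩
  · have : (∫ t in Ioi (0:ℝ), min 1 (t ^ 2) * k t) = ∫ t, ∫ β, F t β ∂ν ∂μ := by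
      rw [hμ]
      exact setIntegral_congr_fun measurableSet_Ioi (fun t _ => keq t)
    rw [this, integral_integral_swap hFint, hν]
    exact setIntegral_congr_fun measurableSet_Ioo hinner
  · have h1 : Integrable (fun t => ∫ β, F t β ∂ν) μ := by
      have := hFint.integral_prod_left
      exact this
    have h2 : (fun t => min 1 (t ^ 2) * k t) = fun t => ∫ β, F t β ∂ν := by
      funext t; exact keq t
    rw [IntegrableOn, ← hμ, h2]
    exact h1
end

section
/- Let 0 < α < 1 and let z ∈ ℂ with Re z > 0. Then the improper integral ∫₀^∞ (1 − e^{−z t}) · (α / Γ(1−α)) · t^{−α−1} dt converges and equals z^α (principal branch of the complex power). In particular, for s > 0, k ∈ ℝ^d and a unit vector u ∈ ℝ^d, taking z = s − i⟨k,u⟩ gives ∫₀^∞ (1 − e^{(i⟨k,u⟩ − s) t}) (α/Γ(1−α)) t^{−α−1} dt = (s − i⟨k,u⟩)^α. -/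
open MeasureTheory Set Real

section StableLevyAux

open Filter Topology

private lemma sle_rpow_exp_integrable {s r : ℝ} (hs : 0 < s) (hr : 0 < r) :
    IntegrableOn (fun t : ℝ => t ^ (s - 1) * Real.exp (-(r * t))) (Ioi 0) := by
  have h := Real.GammaIntegral_convergent hs
  have h2 : IntegrableOn (fun t : ℝ => Real.exp (-(r * t)) * (r * t) ^ (s - 1)) (Ioi 0) := by
    have := (integrableOn_Ioi_comp_mul_left_iff
      (fun x : ℝ => Real.exp (-x) * x ^ (s - 1)) 0 hr).mpr (by simpa using h)
    simpa using this
  have h3 : IntegrableOn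
      (fun t : ℝ => r ^ (1 - s) * (Real.exp (-(r * t)) * (r * t) ^ (s - 1))) (Ioi 0) :=
    h2.const_mul (r ^ (1 - s))
  refine h3.congr_fun (fun t ht => ?_) measurableSet_Ioi
  have ht0 : (0:ℝ) < t := ht
  dsimp only
  rw [Real.mul_rpow hr.le ht0.le]
  rw [show r ^ (1-s) * (Real.exp (-(r*t)) * (r ^ (s-1) * t ^ (s-1)))
      = (r ^ (1-s) * r ^ (s-1)) * (t ^ (s-1) * Real.exp (-(r*t))) by ring,
    ← Real.rpow_add hr]
  norm_num

private lemma sle_cpow_exp_integrable {s : ℝ} (hs : 0 < s) {z : ℂ} (hz : 0 < z.re) :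
    IntegrableOn (fun t : ℝ => ((t ^ (s - 1) : ℝ) : ℂ) * Complex.exp (-z * t)) (Ioi 0) := by
  constructor
  · refine ContinuousOn.aestronglyMeasurable ?_ measurableSet_Ioi
    refine ContinuousOn.mul ?_ ?_
    · exact Complex.continuous_ofReal.comp_continuousOn
        (continuousOn_id.rpow_const fun t ht => Or.inl (ne_of_gt ht))
    · exact (Complex.continuous_exp.comp (continuous_const.mul Complex.continuous_ofReal)).continuousOn
  · rw [← hasFiniteIntegral_norm_iff]
    refine (sle_rpow_exp_integrable hs hz).2.congr ?_
    refine (ae_restrict_iff' measurableSet_Ioi).mpr ?_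
    filter_upwards with t ht
    rw [norm_mul, Complex.norm_real, Real.norm_of_nonneg (Real.rpow_nonneg ht.le _),
      Complex.norm_exp]
    congr 2
    simp [mul_comm]

private lemma sle_laplace_real_rate (α : ℝ) (hα1 : α < 1) {r : ℝ} (hr : 0 < r) :
    ∫ t in Ioi (0:ℝ), ((t ^ (-α) : ℝ) : ℂ) * Complex.exp (-(r:ℂ) * t)
      = (Real.Gamma (1 - α) : ℂ) * (r:ℂ) ^ ((α:ℂ) - 1) := by
  have ha : (0:ℝ) < ((1:ℂ) - α).re := by simp [Complex.sub_re]; linarith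
  have h := Complex.integral_cpow_mul_exp_neg_mul_Ioi (a := 1 - (α:ℂ)) ha hr
  rw [show ∫ t in Ioi (0:ℝ), ((t ^ (-α) : ℝ) : ℂ) * Complex.exp (-(r:ℂ) * t)
      = ∫ t in Ioi (0:ℝ), (t:ℂ) ^ ((1 - (α:ℂ)) - 1) * Complex.exp (-((r:ℝ) * t)) from
    setIntegral_congr_fun measurableSet_Ioi fun t ht => ?_, h]
  · have harg : Complex.arg (r:ℂ) ≠ Real.pi := by
      rw [Complex.arg_ofReal_of_nonneg hr.le]; exact Real.pi_ne_zero.symm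
    rw [one_div, Complex.inv_cpow _ _ harg, ← Complex.cpow_neg]
    rw [show -((1:ℂ) - α) = (α:ℂ) - 1 by ring, show ((1:ℂ) - α) = ((1 - α : ℝ) : ℂ) by push_cast; ring,
      Complex.Gamma_ofReal, mul_comm]
  · have ht0 : (0:ℝ) < t := ht
    rw [Complex.ofReal_cpow ht0.le, show ((1:ℂ) - α) - 1 = ((-α : ℝ) : ℂ) by push_cast; ring]
    push_cast
    ring_nf

private lemma sle_meas_aux (α : ℝ) (z : ℂ) :
    AEStronglyMeasurable (fun t : ℝ => ((t ^ (-α) : ℝ) : ℂ) * Complex.exp (-z * t))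
      (volume.restrict (Ioi 0)) := by
  refine ContinuousOn.aestronglyMeasurable (ContinuousOn.mul ?_ ?_) measurableSet_Ioi
  · exact Complex.continuous_ofReal.comp_continuousOn
      (continuousOn_id.rpow_const fun t ht => Or.inl (ne_of_gt ht))
  · exact (Complex.continuous_exp.comp (continuous_const.mul Complex.continuous_ofReal)).continuousOn

private lemma sle_meas_aux' (α : ℝ) (z : ℂ) :
    AEStronglyMeasurable (fun t : ℝ => ((t ^ (-α) : ℝ) : ℂ) * (-(t:ℂ) * Complex.exp (-z * t)))
      (volume.restrict (Ioi 0)) := by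
  refine ContinuousOn.aestronglyMeasurable (ContinuousOn.mul ?_ (ContinuousOn.mul ?_ ?_)) measurableSet_Ioi
  · exact Complex.continuous_ofReal.comp_continuousOn
      (continuousOn_id.rpow_const fun t ht => Or.inl (ne_of_gt ht))
  · exact (Complex.continuous_ofReal.neg).continuousOn
  · exact (Complex.continuous_exp.comp (continuous_const.mul Complex.continuous_ofReal)).continuousOn

set_option maxHeartbeats 1000000 in
private lemma sle_G_hasDerivAt (α : ℝ) (hα0 : 0 < α) (hα1 : α < 1) {z₀ : ℂ} (hz : 0 < z₀.re) :
    HasDerivAt (fun z : ℂ => ∫ t in Ioi (0:ℝ), ((t ^ (-α) : ℝ) : ℂ) * Complex.exp (-z * t))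
      (∫ t in Ioi (0:ℝ), ((t ^ (-α) : ℝ) : ℂ) * (-(t:ℂ) * Complex.exp (-z₀ * t))) z₀ := by
  set ε := z₀.re / 2 with hε
  have hε0 : 0 < ε := by positivity
  have key := hasDerivAt_integral_of_dominated_loc_of_deriv_le (μ := volume.restrict (Ioi 0))
    (F := fun (z : ℂ) (t : ℝ) => ((t ^ (-α) : ℝ) : ℂ) * Complex.exp (-z * t))
    (F' := fun (z : ℂ) (t : ℝ) => ((t ^ (-α) : ℝ) : ℂ) * (-(t:ℂ) * Complex.exp (-z * t)))
    (x₀ := z₀) (bound := fun t => t ^ ((2 - α) - 1) * Real.exp (-(ε * t))) (Metric.ball_mem_nhds z₀ hε0)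
    (Filter.Eventually.of_forall fun z => sle_meas_aux α z)
    (by
      have h := sle_cpow_exp_integrable (s := 1-α) (by linarith : (0:ℝ) < 1-α) hz
      simpa only [show (1:ℝ) - α - 1 = -α by ring, IntegrableOn] using h)
    (sle_meas_aux' α z₀) ?_ ?_ ?_
  · exact key.2
  · refine (ae_restrict_iff' measurableSet_Ioi).mpr (Filter.Eventually.of_forall fun t ht x hx => ?_)
    have ht0 : (0:ℝ) < t := ht
    have hxre : ε ≤ x.re := by
      have h1 : |x.re - z₀.re| ≤ ‖x - z₀‖ := by
        simpa using Complex.abs_re_le_norm (x - z₀)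
      have h2 : ‖x - z₀‖ < ε := by simpa [Metric.mem_ball, dist_eq_norm] using hx
      have := (abs_le.mp h1).1
      simp only [hε] at *
      linarith
    rw [norm_mul, norm_mul, Complex.norm_real, Real.norm_of_nonneg (Real.rpow_nonneg ht0.le _),
      norm_neg, Complex.norm_real, Real.norm_of_nonneg ht0.le,
      Complex.norm_exp]
    have : t ^ ((2 - α) - 1) = t ^ (-α) * t := by
      rw [show (2 - α) - 1 = (-α) + 1 by ring, Real.rpow_add ht0, Real.rpow_one]
    have hexp : Real.exp ((-x * t).re) ≤ Real.exp (-(ε * t)) := by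
      apply Real.exp_le_exp.mpr
      have : (-x * (t:ℂ)).re = -(x.re * t) := by simp
      rw [this]
      nlinarith
    rw [this]
    calc t ^ (-α) * (t * Real.exp ((-x * ↑t).re)) ≤ t ^ (-α) * (t * Real.exp (-(ε * t))) :=
          mul_le_mul_of_nonneg_left (mul_le_mul_of_nonneg_left hexp ht0.le)
            (Real.rpow_nonneg ht0.le _)
      _ = t ^ (-α) * t * Real.exp (-(ε * t)) := by ring
  · exact sle_rpow_exp_integrable (by linarith) hε0
  · refine (ae_restrict_iff' measurableSet_Ioi).mpr (Filter.Eventually.of_forall fun t ht x hx => ?_)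
    have h1 : HasDerivAt (fun z : ℂ => -z * t) (-(t:ℂ)) x := by
      simpa using ((hasDerivAt_id x).neg.mul_const (t:ℂ))
    have h2 := h1.cexp
    have h3 := h2.const_mul (((t:ℝ) ^ (-α) : ℝ) : ℂ)
    convert h3 using 1
    · rfl
    · ring

private lemma sle_G_eq (α : ℝ) (hα0 : 0 < α) (hα1 : α < 1) {z : ℂ} (hz : 0 < z.re) :
    ∫ t in Ioi (0:ℝ), ((t ^ (-α) : ℝ) : ℂ) * Complex.exp (-z * t)
      = (Real.Gamma (1 - α) : ℂ) * z ^ ((α:ℂ) - 1) := by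
  set U : Set ℂ := {w : ℂ | 0 < w.re} with hU
  have hUopen : IsOpen U := isOpen_lt continuous_const Complex.continuous_re
  have hf : AnalyticOnNhd ℂ
      (fun z : ℂ => ∫ t in Ioi (0:ℝ), ((t ^ (-α) : ℝ) : ℂ) * Complex.exp (-z * t)) U :=
    DifferentiableOn.analyticOnNhd
      (fun w hw => ((sle_G_hasDerivAt α hα0 hα1 hw).differentiableAt).differentiableWithinAt) hUopen
  have hg : AnalyticOnNhd ℂ (fun w : ℂ => (Real.Gamma (1 - α) : ℂ) * w ^ ((α:ℂ) - 1)) U := by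
    refine DifferentiableOn.analyticOnNhd (fun w hw => DifferentiableAt.differentiableWithinAt ?_) hUopen
    exact (differentiableAt_const _).mul
      (differentiableAt_id.cpow (differentiableAt_const _) (Or.inl hw))
  have hpre : IsPreconnected U := (convex_halfSpace_re_gt 0).isPreconnected
  have h1U : (1:ℂ) ∈ U := by simp [hU]
  have hfreq : ∃ᶠ w in nhdsWithin (1:ℂ) {(1:ℂ)}ᶜ,
      (∫ t in Ioi (0:ℝ), ((t ^ (-α) : ℝ) : ℂ) * Complex.exp (-w * t))
        = (Real.Gamma (1 - α) : ℂ) * w ^ ((α:ℂ) - 1) := by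
    have htend : Tendsto (fun n : ℕ => ((1 + 1/(n+1) : ℝ) : ℂ)) atTop
        (nhdsWithin (1:ℂ) {(1:ℂ)}ᶜ) := by
      apply tendsto_nhdsWithin_of_tendsto_nhds_of_eventually_within
      · have : Tendsto (fun n : ℕ => (1 + 1/(n+1) : ℝ)) atTop (nhds 1) := by
          simpa using (tendsto_one_div_add_atTop_nhds_zero_nat (𝕜 := ℝ)).const_add 1
        have := (Complex.continuous_ofReal.tendsto 1).comp this
        simpa [Function.comp_def] using this
      · refine Filter.Eventually.of_forall fun n => ?_
        simp only [mem_compl_iff, mem_singleton_iff]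
        intro h
        have : (1 + 1/(n+1) : ℝ) = 1 := by exact_mod_cast h
        have hpos : (0:ℝ) < 1/(n+1) := by positivity
        linarith
    refine htend.frequently (Filter.Frequently.of_forall fun n => ?_)
    exact sle_laplace_real_rate α hα1 (by positivity)
  exact hf.eqOn_of_preconnected_of_frequently_eq hg hpre h1U hfreq hz

private lemma sle_one_sub_exp_norm_le {z : ℂ} (hz : 0 < z.re) {t : ℝ} (ht : 0 ≤ t) :
    ‖1 - Complex.exp (-z * t)‖ ≤ 2 := by
  have h1 : ‖Complex.exp (-z * t)‖ ≤ 1 := by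
    rw [Complex.norm_exp]
    apply Real.exp_le_one_iff.mpr
    have : (-z * (t:ℂ)).re = -(z.re * t) := by simp
    rw [this]
    nlinarith
  calc ‖1 - Complex.exp (-z * t)‖ ≤ ‖(1:ℂ)‖ + ‖Complex.exp (-z * t)‖ := norm_sub_le _ _
    _ ≤ 2 := by rw [norm_one]; linarith

private lemma sle_one_sub_exp_norm_le' (z : ℂ) {t : ℝ} (ht : 0 ≤ t) (h : ‖z‖ * t ≤ 1) :
    ‖1 - Complex.exp (-z * t)‖ ≤ 2 * ‖z‖ * t := by
  have habs : ‖-z * t‖ ≤ 1 := by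
    rw [norm_mul, norm_neg, Complex.norm_real, Real.norm_of_nonneg ht]
    exact h
  have := Complex.norm_exp_sub_one_le habs
  rw [← norm_sub_rev]
  calc ‖Complex.exp (-z * t) - 1‖ ≤ 2 * ‖-z * t‖ := this
    _ = 2 * ‖z‖ * t := by
        rw [norm_mul, norm_neg, Complex.norm_real, Real.norm_of_nonneg ht]
        ring

private lemma sle_main_integrable (α : ℝ) (hα0 : 0 < α) (hα1 : α < 1) {z : ℂ} (hz : 0 < z.re) :
    IntegrableOn (fun t : ℝ => (1 - Complex.exp (-z * t)) * ((t ^ (-α - 1) : ℝ) : ℂ))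
      (Ioi (0:ℝ)) := by
  set δ : ℝ := 1 / (‖z‖ + 1) with hδ
  have hδ0 : 0 < δ := by positivity
  have hmeas : ∀ s : Set ℝ, MeasurableSet s →
      AEStronglyMeasurable (fun t : ℝ => (1 - Complex.exp (-z * t)) * ((t ^ (-α - 1) : ℝ) : ℂ))
        (volume.restrict (s ∩ Ioi 0)) := by
    intro s hs
    refine ContinuousOn.aestronglyMeasurable (ContinuousOn.mul ?_ ?_) (hs.inter measurableSet_Ioi)
    · exact (continuous_const.sub (Complex.continuous_exp.comp
        (continuous_const.mul Complex.continuous_ofReal))).continuousOn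
    · refine Complex.continuous_ofReal.comp_continuousOn
        (ContinuousOn.mono (s := Ioi 0) ((continuousOn_id).rpow_const
          fun t ht => Or.inl (ne_of_gt ht)) (fun t ht => ht.2))
  rw [← Ioc_union_Ioi_eq_Ioi hδ0.le, integrableOn_union]
  constructor
  · have hg : IntegrableOn (fun t : ℝ => 2 * ‖z‖ * t ^ (-α)) (Ioc 0 δ) := by
      have : IntegrableOn (fun t : ℝ => t ^ (-α)) (Ioc 0 δ) :=
        (intervalIntegrable_iff_integrableOn_Ioc_of_le hδ0.le).mp
          (intervalIntegral.intervalIntegrable_rpow' (by linarith))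
      simpa [mul_assoc, IntegrableOn] using this.const_mul (2 * ‖z‖)
    refine Integrable.mono' hg ?_ ?_
    · have h0 := hmeas (Ioc 0 δ) measurableSet_Ioc
      have heq : Ioc 0 δ ∩ Ioi 0 = Ioc 0 δ := inter_eq_left.mpr (fun t ht => ht.1)
      rwa [heq] at h0
    · refine (ae_restrict_iff' measurableSet_Ioc).mpr (Filter.Eventually.of_forall fun t ht => ?_)
      have ht0 : 0 < t := ht.1
      have hzt : ‖z‖ * t ≤ 1 := by
        have : ‖z‖ * t ≤ ‖z‖ * δ := by
          apply mul_le_mul_of_nonneg_left ht.2 (norm_nonneg _)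
        have hle : ‖z‖ * δ ≤ 1 := by
          rw [hδ, mul_one_div, div_le_one (by positivity)]
          linarith
        linarith
      rw [norm_mul, Complex.norm_real, Real.norm_of_nonneg (Real.rpow_nonneg ht0.le _)]
      calc ‖1 - Complex.exp (-z * t)‖ * t ^ (-α - 1) ≤ (2 * ‖z‖ * t) * t ^ (-α - 1) :=
            mul_le_mul_of_nonneg_right (sle_one_sub_exp_norm_le' z ht0.le hzt)
              (Real.rpow_nonneg ht0.le _)
        _ = 2 * ‖z‖ * t ^ (-α) := by
            rw [show -α = (-α - 1) + 1 by ring, Real.rpow_add ht0, Real.rpow_one]; ring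
  · have hg : IntegrableOn (fun t : ℝ => 2 * t ^ (-α - 1)) (Ioi δ) :=
      (integrableOn_Ioi_rpow_of_lt (by linarith) hδ0).const_mul 2
    refine Integrable.mono' hg ?_ ?_
    · have h0 := hmeas (Ioi δ) measurableSet_Ioi
      have heq : Ioi δ ∩ Ioi 0 = Ioi δ := inter_eq_left.mpr (fun t ht => lt_trans hδ0 ht)
      rwa [heq] at h0
    · refine (ae_restrict_iff' measurableSet_Ioi).mpr (Filter.Eventually.of_forall fun t ht => ?_)
      have ht0 : 0 < t := lt_trans hδ0 ht
      rw [norm_mul, Complex.norm_real, Real.norm_of_nonneg (Real.rpow_nonneg ht0.le _)]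
      exact mul_le_mul_of_nonneg_right (sle_one_sub_exp_norm_le hz ht0.le)
        (Real.rpow_nonneg ht0.le _)

private lemma sle_ibp (α : ℝ) (hα0 : 0 < α) (hα1 : α < 1) {z : ℂ} (hz : 0 < z.re) :
    ∫ t in Ioi (0:ℝ), ((1 - Complex.exp (-z * t)) * (((α * t ^ (-α - 1) : ℝ)) : ℂ)
        - z * (((t ^ (-α) : ℝ) : ℂ) * Complex.exp (-z * t))) = 0 := by
  set f : ℝ → ℂ := fun t => (1 - Complex.exp (-z * t)) * (-((t ^ (-α) : ℝ) : ℂ)) with hf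
  set φ : ℝ → ℂ := fun t => (1 - Complex.exp (-z * t)) * (((α * t ^ (-α - 1) : ℝ)) : ℂ)
      - z * (((t ^ (-α) : ℝ) : ℂ) * Complex.exp (-z * t)) with hφ
  have hderiv : ∀ t : ℝ, 0 < t → HasDerivAt f (φ t) t := by
    intro t ht0
    have hu : HasDerivAt (fun t : ℝ => 1 - Complex.exp (-z * t))
        (z * Complex.exp (-z * t)) t := by
      have h1 : HasDerivAt (fun w : ℂ => Complex.exp (-z * w))
          (Complex.exp (-z * t) * -z) (t : ℂ) := by
        have := ((hasDerivAt_id (t:ℂ)).const_mul (-z)).cexp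
        simpa using this
      have h2 := h1.comp_ofReal
      have h3 := (hasDerivAt_const t (1:ℂ)).sub h2
      convert h3 using 1
      · rfl
      · rfl
      · ring
    have hv : HasDerivAt (fun t : ℝ => -((t ^ (-α) : ℝ) : ℂ))
        (((α * t ^ (-α - 1) : ℝ) : ℂ)) t := by
      have h1 : HasDerivAt (fun t : ℝ => t ^ (-α)) (-α * t ^ (-α - 1)) t :=
        Real.hasDerivAt_rpow_const (Or.inl ht0.ne')
      have h2 := h1.ofReal_comp.neg
      convert h2 using 1
      · rfl
      · rfl
      · push_cast
        ring
    have := hu.mul hv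
    convert this using 1
    · rfl
    · rfl
    · simp only [hφ]
      push_cast
      ring
  have htop : Tendsto f atTop (nhds 0) := by
    have hb : Tendsto (fun t : ℝ => 2 * t ^ (-α)) atTop (nhds 0) := by
      simpa using (tendsto_rpow_neg_atTop hα0).const_mul 2
    refine squeeze_zero_norm' ?_ hb
    · filter_upwards [eventually_gt_atTop 0] with t ht0
      rw [hf]
      simp only [norm_mul, norm_neg, Complex.norm_real,
        Real.norm_of_nonneg (Real.rpow_nonneg ht0.le _)]
      exact mul_le_mul_of_nonneg_right (sle_one_sub_exp_norm_le hz ht0.le)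
        (Real.rpow_nonneg ht0.le _)
  have hφint : IntegrableOn φ (Ioi 0) := by
    apply Integrable.sub
    · have h := (sle_main_integrable α hα0 hα1 hz).const_mul (α:ℂ)
      refine MeasureTheory.IntegrableOn.congr_fun h (fun t ht => ?_) measurableSet_Ioi
      push_cast
      ring
    · have h := sle_cpow_exp_integrable (s := 1 - α) (by linarith) hz
      have h2 := h.const_mul z
      refine MeasureTheory.IntegrableOn.congr_fun h2 (fun t ht => ?_) measurableSet_Ioi
      rw [show (1:ℝ) - α - 1 = -α by ring]
  have hFTC : ∀ ε : ℝ, 0 < ε → ∫ t in Ioi ε, φ t = - f ε := by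
    intro ε hε
    have hcont : ContinuousWithinAt f (Ici ε) ε := by
      apply ContinuousAt.continuousWithinAt
      apply ContinuousAt.mul
      · exact (continuous_const.sub (Complex.continuous_exp.comp
          (continuous_const.mul Complex.continuous_ofReal))).continuousAt
      · exact (Complex.continuous_ofReal.continuousAt.comp
          ((Real.continuousAt_rpow_const _ _ (Or.inl hε.ne')))).neg
    have := integral_Ioi_of_hasDerivAt_of_tendsto hcont
      (fun x hx => hderiv x (lt_trans hε hx)) (hφint.mono_set (Ioi_subset_Ioi hε.le)) htop
    rw [this, zero_sub]
  have hseq : Tendsto (fun n : ℕ => ∫ t in Ioi (1/(n+1) : ℝ), φ t) atTop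
      (nhds (∫ t in Ioi (0:ℝ), φ t)) := by
    have hmono : Monotone (fun n : ℕ => Ioi (1/(n+1) : ℝ)) := by
      intro m n hmn
      apply Ioi_subset_Ioi
      apply one_div_le_one_div_of_le (by positivity)
      exact_mod_cast by omega
    have hunion : (⋃ n : ℕ, Ioi (1/(n+1) : ℝ)) = Ioi (0:ℝ) := by
      ext x
      simp only [mem_iUnion, mem_Ioi]
      constructor
      · rintro ⟨n, hn⟩; exact lt_trans (by positivity) hn
      · intro hx
        obtain ⟨n, hn⟩ := exists_nat_one_div_lt hx
        exact ⟨n, hn⟩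
    have := tendsto_setIntegral_of_monotone (fun n => measurableSet_Ioi) hmono
      (hunion ▸ hφint)
    rwa [hunion] at this
  have hval : ∀ n : ℕ, ∫ t in Ioi (1/(n+1) : ℝ), φ t = - f (1/(n+1) : ℝ) := fun n =>
    hFTC _ (by positivity)
  have hf0 : Tendsto (fun n : ℕ => - f (1/(n+1) : ℝ)) atTop (nhds 0) := by
    rw [show (0:ℂ) = -0 by ring]
    apply Tendsto.neg
    have hb : Tendsto (fun n : ℕ => 2 * ‖z‖ * (1/(n+1):ℝ) ^ (1 - α)) atTop (nhds 0) := by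
      have h1 : Tendsto (fun n : ℕ => (1/(n+1):ℝ)) atTop (nhds 0) :=
        tendsto_one_div_add_atTop_nhds_zero_nat
      have h2 : Tendsto (fun x : ℝ => x ^ (1 - α)) (nhds 0) (nhds 0) := by
        have hc := (Real.continuousAt_rpow_const 0 (1 - α) (Or.inr (by linarith)))
        have h00 : (0:ℝ) ^ (1 - α) = 0 := Real.zero_rpow (by linarith)
        simpa [h00] using hc.tendsto
      simpa using ((h2.comp h1).const_mul (2 * ‖z‖))
    refine squeeze_zero_norm' ?_ hb
    · have hev : ∀ᶠ n : ℕ in atTop, ‖z‖ * (1/(n+1):ℝ) ≤ 1 := by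
        have h1 : Tendsto (fun n : ℕ => ‖z‖ * (1/(n+1):ℝ)) atTop (nhds 0) := by
          simpa using (tendsto_one_div_add_atTop_nhds_zero_nat).const_mul ‖z‖
        exact h1.eventually_le_const (by norm_num : (0:ℝ) < 1)
      filter_upwards [hev] with n hn
      have hε0 : (0:ℝ) < 1/(n+1) := by positivity
      rw [hf]
      simp only [norm_mul, norm_neg, Complex.norm_real,
        Real.norm_of_nonneg (Real.rpow_nonneg hε0.le _)]
      calc ‖1 - Complex.exp (-z * ((1/(n+1):ℝ)))‖ * (1/(n+1):ℝ) ^ (-α)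
          ≤ (2 * ‖z‖ * (1/(n+1):ℝ)) * (1/(n+1):ℝ) ^ (-α) :=
            mul_le_mul_of_nonneg_right (sle_one_sub_exp_norm_le' z hε0.le hn)
              (Real.rpow_nonneg hε0.le _)
        _ = 2 * ‖z‖ * (1/(n+1):ℝ) ^ (1 - α) := by
            rw [show (1:ℝ) - α = -α + 1 by ring, Real.rpow_add hε0, Real.rpow_one]
            ring
  have hlim : Tendsto (fun n : ℕ => ∫ t in Ioi (1/(n+1) : ℝ), φ t) atTop (nhds 0) := by
    simp_rw [hval]; exact hf0
  exact tendsto_nhds_unique hseq hlim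

private lemma sle_main (α : ℝ) (hα0 : 0 < α) (hα1 : α < 1) (z : ℂ) (hz : 0 < z.re) :
    IntegrableOn
        (fun t : ℝ => (1 - Complex.exp (-z * t)) * ((α / Real.Gamma (1 - α) * t ^ (-α - 1) : ℝ) : ℂ))
        (Ioi (0:ℝ)) ∧
      (∫ t in Ioi (0:ℝ),
          (1 - Complex.exp (-z * t)) * ((α / Real.Gamma (1 - α) * t ^ (-α - 1) : ℝ) : ℂ))
        = z ^ (α : ℂ) := by
  have hΓ : 0 < Real.Gamma (1 - α) := Real.Gamma_pos_of_pos (by linarith)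
  have hzne : z ≠ 0 := fun h => by rw [h] at hz; simp at hz
  have hint := sle_main_integrable α hα0 hα1 hz
  have hGint : IntegrableOn (fun t : ℝ => ((t ^ (-α) : ℝ) : ℂ) * Complex.exp (-z * t)) (Ioi 0) := by
    have h := sle_cpow_exp_integrable (s := 1 - α) (by linarith) hz
    simpa only [show (1:ℝ) - α - 1 = -α by ring] using h
  have hAint : IntegrableOn
      (fun t : ℝ => (1 - Complex.exp (-z * t)) * (((α * t ^ (-α - 1) : ℝ)) : ℂ)) (Ioi 0) := by
    have h := hint.const_mul (α:ℂ)
    refine MeasureTheory.IntegrableOn.congr_fun h (fun t ht => ?_) measurableSet_Ioi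
    push_cast
    ring
  have hBint : IntegrableOn
      (fun t : ℝ => z * (((t ^ (-α) : ℝ) : ℂ) * Complex.exp (-z * t))) (Ioi 0) :=
    hGint.const_mul z
  have hsub := integral_sub hAint hBint
  rw [sle_ibp α hα0 hα1 hz] at hsub
  have hAB : (∫ t in Ioi (0:ℝ), (1 - Complex.exp (-z * t)) * (((α * t ^ (-α - 1) : ℝ)) : ℂ))
      = ∫ t in Ioi (0:ℝ), z * (((t ^ (-α) : ℝ) : ℂ) * Complex.exp (-z * t)) := by
    have := sub_eq_zero.mp hsub.symm
    linear_combination this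
  have hB : (∫ t in Ioi (0:ℝ), z * (((t ^ (-α) : ℝ) : ℂ) * Complex.exp (-z * t)))
      = z * ((Real.Gamma (1 - α) : ℂ) * z ^ ((α:ℂ) - 1)) := by
    rw [integral_const_mul, sle_G_eq α hα0 hα1 hz]
  constructor
  · have h := hint.const_mul ((α / Real.Gamma (1 - α) : ℝ) : ℂ)
    refine MeasureTheory.IntegrableOn.congr_fun h (fun t ht => ?_) measurableSet_Ioi
    push_cast
    ring
  · have hrw : (∫ t in Ioi (0:ℝ),
        (1 - Complex.exp (-z * t)) * ((α / Real.Gamma (1 - α) * t ^ (-α - 1) : ℝ) : ℂ))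
        = ((Real.Gamma (1 - α))⁻¹ : ℝ) •
          ∫ t in Ioi (0:ℝ), (1 - Complex.exp (-z * t)) * (((α * t ^ (-α - 1) : ℝ)) : ℂ) := by
      rw [← MeasureTheory.integral_smul]
      refine setIntegral_congr_fun measurableSet_Ioi fun t ht => ?_
      rw [Complex.real_smul]
      push_cast
      ring
    rw [hrw, hAB, hB]
    rw [Complex.real_smul]
    push_cast
    rw [show ((Real.Gamma (1 - α) : ℂ))⁻¹ * (z * ((Real.Gamma (1 - α) : ℂ) * z ^ ((α:ℂ) - 1)))
        = ((Real.Gamma (1 - α) : ℂ))⁻¹ * (Real.Gamma (1 - α) : ℂ) * (z * z ^ ((α:ℂ) - 1)) by ring,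
      inv_mul_cancel₀ (by exact_mod_cast hΓ.ne'), one_mul]
    rw [show z * z ^ ((α:ℂ) - 1) = z ^ (1:ℂ) * z ^ ((α:ℂ) - 1) by rw [Complex.cpow_one],
      ← Complex.cpow_add _ _ hzne]
    ring_nf

end StableLevyAux

/-- For `0 < α < 1` and `z ∈ ℂ` with `Re z > 0`, the integral
`∫₀^∞ (1 − e^{−z t}) (α/Γ(1−α)) t^(−α−1) dt` converges and equals `z^α` (principal
branch). In particular, for `s > 0`, `k ∈ ℝ^d` and a unit vector `u`, taking
`z = s − i⟨k,u⟩` gives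
`∫₀^∞ (1 − e^{(i⟨k,u⟩ − s) t}) (α/Γ(1−α)) t^(−α−1) dt = (s − i⟨k,u⟩)^α`. -/
theorem stable_levy_exponent (α : ℝ) (hα0 : 0 < α) (hα1 : α < 1)
    (z : ℂ) (hz : 0 < z.re) :
    (IntegrableOn
        (fun t : ℝ => (1 - Complex.exp (-z * t)) * ((α / Real.Gamma (1 - α) * t ^ (-α - 1) : ℝ) : ℂ))
        (Ioi (0:ℝ)) ∧
      (∫ t in Ioi (0:ℝ),
          (1 - Complex.exp (-z * t)) * ((α / Real.Gamma (1 - α) * t ^ (-α - 1) : ℝ) : ℂ))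
        = z ^ (α : ℂ)) ∧
    ∀ (d : ℕ) (s : ℝ), 0 < s → ∀ (k u : EuclideanSpace ℝ (Fin d)), ‖u‖ = 1 →
      (∫ t in Ioi (0:ℝ),
          (1 - Complex.exp ((Complex.I * ((inner ℝ k u : ℝ) : ℂ) - (s : ℂ)) * t)) *
            ((α / Real.Gamma (1 - α) * t ^ (-α - 1) : ℝ) : ℂ))
        = ((s : ℂ) - Complex.I * ((inner ℝ k u : ℝ) : ℂ)) ^ (α : ℂ) := by
  refine ⟨sle_main α hα0 hα1 z hz, fun d s hs k u hu => ?_⟩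
  set c : ℝ := (inner ℝ k u : ℝ) with hc
  have hre : 0 < ((s : ℂ) - Complex.I * (c : ℂ)).re := by
    simp [Complex.sub_re, Complex.mul_re]
    exact hs
  have h := (sle_main α hα0 hα1 ((s : ℂ) - Complex.I * (c : ℂ)) hre).2
  have heq : ∀ t : ℝ, (Complex.I * (c : ℂ) - (s : ℂ)) * t
      = -((s : ℂ) - Complex.I * (c : ℂ)) * t := fun t => by ring
  simp_rw [heq]
  exact h
end

section
/- Let 0 < α < 1, let Λ be a (Borel) probability measure on the unit sphere S^{d−1} ⊂ ℝ^d, let s > 0 and k ∈ ℝ^d. Then ∫_{S^{d−1}} ∫₀^∞ (1 − e^{(i⟨k,u⟩ − s) t}) (α/Γ(1−α)) t^{−α−1} dt Λ(du) = ∫_{S^{d−1}} (s − i⟨k,u⟩)^α Λ(du), with all integrals absolutely convergent; i.e., the Fourier–Laplace exponent of the coupled Lévy process (L_α, S_α), whose joint Lévy measure is the image of Λ(du) ⊗ (α/Γ(1−α)) t^{−α−1} dt under (u,t) ↦ (t u, t), equals ψ(k,s) = ∫_{S^{d−1}} (s − i⟨k,u⟩)^α Λ(du). -/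
open MeasureTheory Set Filter

namespace MDS

lemma norm_exp_neg_le_one {z : ℂ} (hz : 0 ≤ z.re) {t : ℝ} (ht : 0 ≤ t) :
    ‖Complex.exp (-z * t)‖ ≤ 1 := by
  rw [Complex.norm_exp]
  have : (-z * t).re = -(z.re * t) := by simp [Complex.mul_re]
  rw [this]
  exact Real.exp_le_one_iff.mpr (by nlinarith)

lemma norm_one_sub_exp_le_two {z : ℂ} (hz : 0 ≤ z.re) {t : ℝ} (ht : 0 ≤ t) :
    ‖1 - Complex.exp (-z * t)‖ ≤ 2 := by
  calc ‖1 - Complex.exp (-z * t)‖ ≤ ‖(1:ℂ)‖ + ‖Complex.exp (-z*t)‖ := norm_sub_le _ _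
  _ ≤ 1 + 1 := by simpa using norm_exp_neg_le_one hz ht
  _ = 2 := by norm_num

lemma norm_one_sub_exp_le_lin {z : ℂ} {t : ℝ} (ht : 0 ≤ t) (hsmall : ‖z‖ * t ≤ 1) :
    ‖1 - Complex.exp (-z * t)‖ ≤ 2 * (‖z‖ * t) := by
  have h1 : ‖-z * t‖ ≤ 1 := by
    rw [norm_mul, norm_neg, Complex.norm_real, Real.norm_eq_abs, abs_of_nonneg ht]
    exact hsmall
  have := Complex.norm_exp_sub_one_le h1
  rw [norm_sub_rev]
  calc ‖Complex.exp (-z*t) - 1‖ ≤ 2 * ‖-z * t‖ := this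
  _ = 2 * (‖z‖ * t) := by
        rw [norm_mul, norm_neg, Complex.norm_real, Real.norm_eq_abs, abs_of_nonneg ht]

end MDS

namespace MDS

lemma neg_mul_re (z : ℂ) (t : ℝ) : (-z * t).re = -(z.re * t) := by
  simp [Complex.mul_re]

lemma aesm_main (α : ℝ) (z : ℂ) (c : ℝ) :
    AEStronglyMeasurable
      (fun t : ℝ => (1 - Complex.exp (-z * t)) * ((c * t ^ (-α - 1) : ℝ) : ℂ))
      (volume.restrict (Ioi 0)) := by
  apply Measurable.aestronglyMeasurable
  fun_prop

lemma norm_main (α : ℝ) (z : ℂ) (c : ℝ) {t : ℝ} (ht : 0 < t) :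
    ‖(1 - Complex.exp (-z * t)) * ((c * t ^ (-α - 1) : ℝ) : ℂ)‖
      = ‖1 - Complex.exp (-z * t)‖ * (|c| * t ^ (-α - 1)) := by
  rw [norm_mul, Complex.norm_real, Real.norm_eq_abs, abs_mul,
    abs_of_nonneg (Real.rpow_nonneg ht.le _)]

lemma integrableOn_main {α : ℝ} (hα0 : 0 < α) (hα1 : α < 1) {z : ℂ} (hz : 0 < z.re) (c : ℝ) :
    IntegrableOn (fun t : ℝ => (1 - Complex.exp (-z * t)) * ((c * t ^ (-α - 1) : ℝ) : ℂ))
      (Ioi (0:ℝ)) := by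
  set δ : ℝ := (‖z‖ + 1)⁻¹ with hδ
  have hzn : (0:ℝ) ≤ ‖z‖ := norm_nonneg z
  have δpos : 0 < δ := by positivity
  have h1 : IntegrableOn (fun t : ℝ => (1 - Complex.exp (-z * t)) * ((c * t ^ (-α - 1) : ℝ) : ℂ))
      (Ioc (0:ℝ) δ) := by
    have hmaj : IntegrableOn (fun t : ℝ => (2 * ‖z‖ * |c|) * t ^ (-α)) (Ioc (0:ℝ) δ) := by
      have := (intervalIntegral.intervalIntegrable_rpow' (a := 0) (b := δ)
        (r := -α) (by linarith)).1
      exact this.const_mul _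
    refine Integrable.mono' hmaj ((aesm_main α z c).mono_measure
      (Measure.restrict_mono Ioc_subset_Ioi_self le_rfl)) ?_
    rw [ae_restrict_iff' measurableSet_Ioc]
    filter_upwards with t ht
    obtain ⟨ht0, htδ⟩ := ht
    rw [norm_main α z c ht0]
    have hsmall : ‖z‖ * t ≤ 1 := by
      calc ‖z‖ * t ≤ (‖z‖ + 1) * δ := by
            apply mul_le_mul (by linarith) htδ ht0.le (by linarith)
      _ = 1 := by rw [hδ]; field_simp
    have hb := norm_one_sub_exp_le_lin ht0.le hsmall
    calc ‖1 - Complex.exp (-z * t)‖ * (|c| * t ^ (-α - 1))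
        ≤ (2 * (‖z‖ * t)) * (|c| * t ^ (-α - 1)) := by
          apply mul_le_mul_of_nonneg_right hb (by positivity)
    _ = (2 * ‖z‖ * |c|) * (t ^ (1:ℝ) * t ^ (-α - 1)) := by
          rw [Real.rpow_one]; ring
    _ = (2 * ‖z‖ * |c|) * t ^ (-α) := by
          rw [← Real.rpow_add ht0]; norm_num
  have h2 : IntegrableOn (fun t : ℝ => (1 - Complex.exp (-z * t)) * ((c * t ^ (-α - 1) : ℝ) : ℂ))
      (Ioi δ) := by
    have hmaj : IntegrableOn (fun t : ℝ => (2 * |c|) * t ^ (-α - 1)) (Ioi δ) :=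
      (integrableOn_Ioi_rpow_of_lt (by linarith) δpos).const_mul _
    refine Integrable.mono' hmaj ((aesm_main α z c).mono_measure
      (Measure.restrict_mono (Ioi_subset_Ioi δpos.le) le_rfl)) ?_
    rw [ae_restrict_iff' measurableSet_Ioi]
    filter_upwards with t ht
    have ht0 : 0 < t := lt_trans δpos ht
    rw [norm_main α z c ht0]
    have hb := norm_one_sub_exp_le_two hz.le ht0.le
    calc ‖1 - Complex.exp (-z * t)‖ * (|c| * t ^ (-α - 1))
        ≤ 2 * (|c| * t ^ (-α-1)) := by
          apply mul_le_mul_of_nonneg_right hb (by positivity)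
    _ = (2 * |c|) * t ^ (-α - 1) := by ring
  have := h1.union h2
  rwa [Ioc_union_Ioi_eq_Ioi δpos.le] at this

lemma integrableOn_lap {α : ℝ} (hα1 : α < 1) {z : ℂ} (hz : 0 < z.re) :
    IntegrableOn (fun t : ℝ => ((t ^ (-α) : ℝ) : ℂ) * Complex.exp (-z * t)) (Ioi (0:ℝ)) := by
  have hmaj : IntegrableOn (fun t : ℝ => t ^ (-α) * Real.exp (-z.re * t)) (Ioi (0:ℝ)) := by
    have := integrableOn_rpow_mul_exp_neg_mul_rpow (s := -α) (p := 1)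
      (by linarith) one_pos hz
    simpa [Real.rpow_one] using this
  refine Integrable.mono' hmaj (Measurable.aestronglyMeasurable (by fun_prop)) ?_
  rw [ae_restrict_iff' measurableSet_Ioi]
  filter_upwards with t ht
  rw [norm_mul, Complex.norm_real, Real.norm_eq_abs, abs_of_nonneg (Real.rpow_nonneg ht.le _),
    Complex.norm_exp, neg_mul_re]
  rw [neg_mul]

end MDS

namespace MDS

lemma lap_real {α : ℝ} (hα1 : α < 1) {r : ℝ} (hr : 0 < r) :
    ∫ t in Ioi (0:ℝ), ((t ^ (-α) : ℝ) : ℂ) * Complex.exp (-(r:ℂ) * t)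
      = (Real.Gamma (1 - α) : ℂ) * (r:ℂ) ^ ((α:ℂ) - 1) := by
  have key := Complex.integral_cpow_mul_exp_neg_mul_Ioi (a := ((1 - α : ℝ) : ℂ))
    (by simpa using by linarith : (0:ℝ) < ((1 - α : ℝ) : ℂ).re) hr
  have hL : ∫ t in Ioi (0:ℝ), ((t ^ (-α) : ℝ) : ℂ) * Complex.exp (-(r:ℂ) * t)
      = ∫ t in Ioi (0:ℝ), (t:ℂ) ^ (((1 - α : ℝ) : ℂ) - 1) * Complex.exp (-((r:ℝ) * t)) := by
    refine setIntegral_congr_fun measurableSet_Ioi (fun t ht => ?_)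
    rw [mem_Ioi] at ht
    rw [Complex.ofReal_cpow ht.le]
    congr 1
    · congr 1; push_cast; ring
    · push_cast; ring_nf
  rw [hL, key]
  have harg : Complex.arg (r:ℂ) ≠ Real.pi := by
    rw [Complex.arg_ofReal_of_nonneg hr.le]
    exact Real.pi_pos.ne
  have h1 : ((1:ℂ) / r) ^ (((1 - α : ℝ) : ℂ)) = (r:ℂ) ^ ((α:ℂ) - 1) := by
    rw [one_div, Complex.inv_cpow _ _ harg, ← Complex.cpow_neg]
    congr 1
    push_cast; ring
  rw [h1, Complex.Gamma_ofReal, mul_comm]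

end MDS

namespace MDS

lemma lap_eq {α : ℝ} (hα0 : 0 < α) (hα1 : α < 1) {z : ℂ} (hz : 0 < z.re) :
    ∫ t in Ioi (0:ℝ), ((t ^ (-α) : ℝ) : ℂ) * Complex.exp (-z * t)
      = (Real.Gamma (1 - α) : ℂ) * z ^ ((α:ℂ) - 1) := by
  set L : ℂ → ℂ := fun w => ∫ t in Ioi (0:ℝ), ((t ^ (-α) : ℝ) : ℂ) * Complex.exp (-w * t)
    with hLdef
  set G : ℂ → ℂ := fun w => (Real.Gamma (1 - α) : ℂ) * w ^ ((α:ℂ) - 1) with hGdef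
  set U : Set ℂ := {w : ℂ | 0 < w.re} with hUdef
  have hUopen : IsOpen U := isOpen_lt continuous_const Complex.continuous_re
  have hUconn : IsPreconnected U := (convex_halfSpace_re_gt 0).isPreconnected
  -- differentiability of L on U
  have hLdiff : DifferentiableOn ℂ L U := by
    intro w₀ hw₀
    have hσ : 0 < w₀.re := hw₀
    have hmeas : ∀ w : ℂ, AEStronglyMeasurable
        (fun t : ℝ => ((t ^ (-α) : ℝ) : ℂ) * Complex.exp (-w * t))
        (volume.restrict (Ioi 0)) := fun w =>
      Measurable.aestronglyMeasurable (by fun_prop)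
    have hbound_int : Integrable (fun t : ℝ => t ^ (1 - α) * Real.exp (-(w₀.re / 2) * t))
        (volume.restrict (Ioi 0)) := by
      have := integrableOn_rpow_mul_exp_neg_mul_rpow (s := 1 - α) (p := 1)
        (by linarith) one_pos (by positivity : (0:ℝ) < w₀.re / 2)
      simpa [Real.rpow_one, IntegrableOn] using this
    have h_bound : ∀ᵐ t ∂(volume.restrict (Ioi (0:ℝ))), ∀ w ∈ Metric.ball w₀ (w₀.re / 2),
        ‖((t ^ (-α) : ℝ) : ℂ) * (Complex.exp (-w * t) * (-(t:ℂ)))‖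
          ≤ t ^ (1 - α) * Real.exp (-(w₀.re / 2) * t) := by
      rw [ae_restrict_iff' measurableSet_Ioi]
      filter_upwards with t ht
      rw [mem_Ioi] at ht
      intro w hw
      have hwre : w₀.re / 2 ≤ w.re := by
        have := Complex.abs_re_le_norm (w - w₀)
        rw [Metric.mem_ball, Complex.dist_eq] at hw
        have h2 : |(w - w₀).re| < w₀.re / 2 := lt_of_le_of_lt this hw
        rw [Complex.sub_re, abs_lt] at h2
        linarith [h2.1]
      rw [norm_mul, norm_mul, norm_neg, Complex.norm_real, Real.norm_eq_abs,
        abs_of_nonneg (Real.rpow_nonneg ht.le _), Complex.norm_exp,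
        neg_mul_re, Complex.norm_real, Real.norm_eq_abs, abs_of_nonneg ht.le]
      have h3 : t ^ (-α) * (Real.exp (-(w.re * t)) * t) = t ^ (1-α) * Real.exp (-(w.re * t)) := by
        have hpow : t ^ (1-α) = t ^ (-α) * t := by
          rw [show (1:ℝ)-α = -α + 1 by ring, Real.rpow_add ht, Real.rpow_one]
        rw [hpow]; ring
      rw [h3]
      apply mul_le_mul_of_nonneg_left _ (Real.rpow_nonneg ht.le _)
      apply Real.exp_le_exp.mpr
      have := mul_le_mul_of_nonneg_right hwre ht.le
      linarith
    have h_diff : ∀ᵐ t ∂(volume.restrict (Ioi (0:ℝ))), ∀ w ∈ Metric.ball w₀ (w₀.re / 2),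
        HasDerivAt (fun w : ℂ => ((t ^ (-α) : ℝ) : ℂ) * Complex.exp (-w * t))
          (((t ^ (-α) : ℝ) : ℂ) * (Complex.exp (-w * t) * (-(t:ℂ)))) w := by
      filter_upwards with t
      intro w _
      have h1 : HasDerivAt (fun w : ℂ => -w * (t:ℂ)) (-(t:ℂ)) w := by
        simpa using ((hasDerivAt_id w).neg.mul_const (t:ℂ))
      exact (h1.cexp).const_mul _
    have key := hasDerivAt_integral_of_dominated_loc_of_deriv_le
      (F := fun w (t : ℝ) => ((t ^ (-α) : ℝ) : ℂ) * Complex.exp (-w * t))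
      (F' := fun w (t : ℝ) => ((t ^ (-α) : ℝ) : ℂ) * (Complex.exp (-w * t) * (-(t:ℂ))))
      (x₀ := w₀) (μ := volume.restrict (Ioi 0))
      (bound := fun t : ℝ => t ^ (1 - α) * Real.exp (-(w₀.re / 2) * t))
      (Metric.ball_mem_nhds w₀ (by positivity))
      (Eventually.of_forall hmeas)
      (integrableOn_lap hα1 hσ)
      (Measurable.aestronglyMeasurable (by fun_prop))
      h_bound hbound_int h_diff
    exact (key.2.differentiableAt).differentiableWithinAt
  have hGdiff : DifferentiableOn ℂ G U := by
    intro w hw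
    refine DifferentiableAt.differentiableWithinAt ?_
    apply DifferentiableAt.const_mul
    exact (differentiableAt_id.cpow (differentiableAt_const _)
      (Complex.mem_slitPlane_iff.mpr (Or.inl hw)))
  have hLan : AnalyticOnNhd ℂ L U := hLdiff.analyticOnNhd hUopen
  have hGan : AnalyticOnNhd ℂ G U := hGdiff.analyticOnNhd hUopen
  have h1U : (1:ℂ) ∈ U := by simp [hUdef]
  have hfreq : ∃ᶠ w in nhdsWithin (1:ℂ) {(1:ℂ)}ᶜ, L w = G w := by
    have hseq : Tendsto (fun n : ℕ => ((1 + ((n:ℝ)+1)⁻¹ : ℝ) : ℂ)) atTop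
        (nhdsWithin (1:ℂ) {(1:ℂ)}ᶜ) := by
      rw [tendsto_nhdsWithin_iff]
      constructor
      · have hr : Tendsto (fun n : ℕ => (1 + ((n:ℝ)+1)⁻¹ : ℝ)) atTop (nhds 1) := by
          have := tendsto_one_div_add_atTop_nhds_zero_nat (𝕜 := ℝ)
          simpa [one_div] using tendsto_const_nhds.add this
        have := (Complex.continuous_ofReal.tendsto 1).comp hr
        simpa [Function.comp_def] using this
      · filter_upwards with n
        simp only [mem_compl_iff, mem_singleton_iff]
        intro hcon
        rw [show (1:ℂ) = ((1:ℝ):ℂ) from by norm_num, Complex.ofReal_inj] at hcon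
        have : (0:ℝ) < ((n:ℝ)+1)⁻¹ := by positivity
        linarith
    apply hseq.frequently
    apply Frequently.of_forall
    intro n
    have hrpos : (0:ℝ) < 1 + ((n:ℝ)+1)⁻¹ := by positivity
    show L (((1 + ((n:ℝ)+1)⁻¹ : ℝ)) : ℂ) = G (((1 + ((n:ℝ)+1)⁻¹ : ℝ)) : ℂ)
    rw [hLdef, hGdef]
    exact lap_real hα1 hrpos
  have := hLan.eqOn_of_preconnected_of_frequently_eq hGan hUconn h1U hfreq
  exact this hz


lemma gzero_cwa {α : ℝ} (hα0 : 0 < α) (hα1 : α < 1) {z : ℂ} (hz : 0 < z.re) :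
    ContinuousWithinAt (fun t : ℝ => (-(((t ^ (-α) : ℝ)) : ℂ)) * (1 - Complex.exp (-z * t)))
      (Ici 0) 0 := by
  unfold ContinuousWithinAt
  have key : Tendsto (fun t : ℝ => (-(((t ^ (-α) : ℝ)) : ℂ)) * (1 - Complex.exp (-z * t)))
      (nhdsWithin (0:ℝ) (Ici 0)) (nhds 0) := by
    apply squeeze_zero_norm' (a := fun t : ℝ => (2 * ‖z‖) * (t ^ (1 - α)))
    · have hev : ∀ᶠ t in nhdsWithin (0:ℝ) (Ici 0), t ∈ Ici (0:ℝ) ∧ t < (‖z‖ + 1)⁻¹ := by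
        have h1 : ∀ᶠ t in nhdsWithin (0:ℝ) (Ici 0), t ∈ Ici (0:ℝ) :=
          eventually_mem_nhdsWithin
        have h2 : ∀ᶠ t in nhdsWithin (0:ℝ) (Ici 0), t < (‖z‖ + 1)⁻¹ :=
          eventually_nhdsWithin_of_eventually_nhds
            (Filter.Tendsto.eventually_lt_const (by positivity) tendsto_id)
        exact h1.and h2
      filter_upwards [hev] with t htt
      obtain ⟨ht0, htδ⟩ := htt
      rcases eq_or_lt_of_le (mem_Ici.mp ht0) with h | h
      · rw [← h]
        simp
        positivity
      · have hsmall : ‖z‖ * t ≤ 1 := by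
          have hzn : (0:ℝ) ≤ ‖z‖ := norm_nonneg z
          calc ‖z‖ * t ≤ (‖z‖ + 1) * (‖z‖ + 1)⁻¹ :=
                mul_le_mul (by linarith) htδ.le h.le (by linarith)
          _ = 1 := by field_simp
        rw [norm_mul, norm_neg, Complex.norm_real, Real.norm_eq_abs,
          abs_of_nonneg (Real.rpow_nonneg h.le _)]
        calc t ^ (-α) * ‖1 - Complex.exp (-z * t)‖
            ≤ t ^ (-α) * (2 * (‖z‖ * t)) :=
              mul_le_mul_of_nonneg_left (norm_one_sub_exp_le_lin h.le hsmall)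
                (Real.rpow_nonneg h.le _)
        _ = (2 * ‖z‖) * (t ^ (-α) * t) := by ring
        _ = (2 * ‖z‖) * (t ^ (1 - α)) := by
              rw [show t ^ ((1:ℝ)-α) = t ^ (-α) * t from by
                rw [show (1:ℝ)-α = -α + 1 by ring, Real.rpow_add h, Real.rpow_one]]
    · have hc : ContinuousAt (fun t : ℝ => t ^ (1 - α)) 0 :=
        Real.continuousAt_rpow_const 0 (1-α) (Or.inr (by linarith))
      have h5 : Tendsto (fun t : ℝ => t ^ (1 - α)) (nhdsWithin (0:ℝ) (Ici 0))
          (nhds ((0:ℝ) ^ ((1:ℝ) - α))) :=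
        hc.tendsto.mono_left nhdsWithin_le_nhds
      have := h5.const_mul (2 * ‖z‖)
      simpa [Real.zero_rpow (show (1:ℝ) - α ≠ 0 by intro h; linarith)] using this
  have h0 : (fun t : ℝ => (-(((t ^ (-α) : ℝ)) : ℂ)) * (1 - Complex.exp (-z * t))) 0 = 0 := by
    simp
  rw [h0]
  exact key

lemma gzero_top {α : ℝ} (hα0 : 0 < α) {z : ℂ} (hz : 0 < z.re) :
    Tendsto (fun t : ℝ => (-(((t ^ (-α) : ℝ)) : ℂ)) * (1 - Complex.exp (-z * t))) atTop
      (nhds 0) := by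
  apply squeeze_zero_norm' (a := fun t : ℝ => 2 * (t ^ (-α)))
  · filter_upwards [eventually_gt_atTop (0:ℝ)] with t ht
    rw [norm_mul, norm_neg, Complex.norm_real, Real.norm_eq_abs,
      abs_of_nonneg (Real.rpow_nonneg ht.le _)]
    calc t ^ (-α) * ‖1 - Complex.exp (-z * t)‖ ≤ t ^ (-α) * 2 :=
          mul_le_mul_of_nonneg_left (norm_one_sub_exp_le_two hz.le ht.le)
            (Real.rpow_nonneg ht.le _)
    _ = 2 * t ^ (-α) := by ring
  · simpa using (tendsto_rpow_neg_atTop hα0).const_mul 2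

lemma inner_eq {α : ℝ} (hα0 : 0 < α) (hα1 : α < 1) {z : ℂ} (hz : 0 < z.re) :
    ∫ t in Ioi (0:ℝ),
        (1 - Complex.exp (-z * t)) * ((α / Real.Gamma (1 - α) * t ^ (-α - 1) : ℝ) : ℂ)
      = z ^ (α:ℂ) := by
  have hz0 : z ≠ 0 := by intro h; rw [h] at hz; simp at hz
  have hΓpos : 0 < Real.Gamma (1 - α) := Real.Gamma_pos_of_pos (by linarith)
  have hΓne : ((Real.Gamma (1 - α) : ℝ) : ℂ) ≠ 0 := by
    exact_mod_cast hΓpos.ne'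
  set g' : ℝ → ℂ := fun t =>
    (-(((-α * t ^ (-α - 1) : ℝ)) : ℂ)) * (1 - Complex.exp (-z * t))
      + (((t ^ (-α) : ℝ)) : ℂ) * (Complex.exp (-z * t) * -z) with hg'def
  have hderiv : ∀ x ∈ Ioi (0:ℝ),
      HasDerivAt (fun t : ℝ => (-(((t ^ (-α) : ℝ)) : ℂ)) * (1 - Complex.exp (-z * t)))
        (g' x) x := by
    intro x hx
    rw [mem_Ioi] at hx
    have h1 : HasDerivAt (fun t : ℝ => -(((t ^ (-α) : ℝ)) : ℂ))
        (-(((-α * x ^ (-α - 1) : ℝ)) : ℂ)) x :=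
      ((Real.hasDerivAt_rpow_const (Or.inl hx.ne')).ofReal_comp).neg
    have h2 : HasDerivAt (fun t : ℝ => -z * (t:ℂ)) (-z) x := by
      simpa using (Complex.ofRealCLM.hasDerivAt (x := x)).const_mul (-z)
    have h3 := (hasDerivAt_const x (1:ℂ)).sub h2.cexp
    have := h1.mul h3
    rw [hg'def]
    refine this.congr_deriv ?_
    simp only [Pi.sub_apply]
    push_cast
    ring
  have hintA : IntegrableOn
      (fun t : ℝ => (-(((-α * t ^ (-α - 1) : ℝ)) : ℂ)) * (1 - Complex.exp (-z * t)))
      (Ioi (0:ℝ)) := by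
    apply (integrableOn_main hα0 hα1 hz (-α)).neg.congr
    filter_upwards with t
    simp only [Pi.neg_apply]
    push_cast
    ring
  have hintB : IntegrableOn
      (fun t : ℝ => (((t ^ (-α) : ℝ)) : ℂ) * (Complex.exp (-z * t) * -z)) (Ioi (0:ℝ)) := by
    apply ((integrableOn_lap hα1 hz).mul_const (-z)).congr
    filter_upwards with t
    ring
  have hint : IntegrableOn g' (Ioi (0:ℝ)) := hintA.add hintB
  have hibp := integral_Ioi_of_hasDerivAt_of_tendsto (gzero_cwa hα0 hα1 hz) hderiv hint
    (gzero_top hα0 hz)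
  simp only [Complex.ofReal_zero, mul_zero, Complex.exp_zero, sub_self, mul_zero,
    sub_zero] at hibp
  rw [hg'def, integral_add hintA hintB] at hibp
  have hcpow : z ^ (α:ℂ) = z * z ^ ((α:ℂ) - 1) := by
    conv_lhs => rw [show (α:ℂ) = 1 + ((α:ℂ) - 1) by ring]
    rw [Complex.cpow_add _ _ hz0, Complex.cpow_one]
  have hBval : ∫ t in Ioi (0:ℝ), (((t ^ (-α) : ℝ)) : ℂ) * (Complex.exp (-z * t) * -z)
      = -((Real.Gamma (1 - α) : ℂ) * z ^ (α:ℂ)) := by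
    have h4 : ∫ t in Ioi (0:ℝ), (((t ^ (-α) : ℝ)) : ℂ) * (Complex.exp (-z * t) * -z)
        = ∫ t in Ioi (0:ℝ), (-z) * ((((t ^ (-α) : ℝ)) : ℂ) * Complex.exp (-z * t)) := by
      refine setIntegral_congr_fun measurableSet_Ioi (fun t ht => ?_)
      ring
    rw [h4, integral_const_mul, lap_eq hα0 hα1 hz, hcpow]
    ring
  have hAval : ∫ t in Ioi (0:ℝ),
      (-(((-α * t ^ (-α - 1) : ℝ)) : ℂ)) * (1 - Complex.exp (-z * t))
      = (Real.Gamma (1 - α) : ℂ) * z ^ (α:ℂ) := by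
    rw [hBval] at hibp
    linear_combination hibp
  have hfin : ∀ t ∈ Ioi (0:ℝ),
      (1 - Complex.exp (-z * t)) * ((α / Real.Gamma (1 - α) * t ^ (-α - 1) : ℝ) : ℂ)
        = (((Real.Gamma (1 - α) : ℝ) : ℂ))⁻¹ *
          ((-(((-α * t ^ (-α - 1) : ℝ)) : ℂ)) * (1 - Complex.exp (-z * t))) := by
    intro t ht
    push_cast
    field_simp
  rw [setIntegral_congr_fun measurableSet_Ioi hfin, integral_const_mul, hAval, ← mul_assoc,
    inv_mul_cancel₀ hΓne, one_mul]


end MDS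

open MDS in
/-- For `0 < α < 1`, a probability measure `Λ` on the unit sphere
`S^{d−1} ⊂ ℝ^d`, `s > 0` and `k ∈ ℝ^d`, the Fourier–Laplace exponent of the coupled
Lévy process `(L_α, S_α)` equals `ψ(k,s) = ∫_{S^{d−1}} (s − i⟨k,u⟩)^α Λ(du)`:
`∫_{S^{d−1}} ∫₀^∞ (1 − e^{(i⟨k,u⟩ − s)t}) (α/Γ(1−α)) t^(−α−1) dt Λ(du)
  = ∫_{S^{d−1}} (s − i⟨k,u⟩)^α Λ(du)`, with all integrals absolutely convergent. -/
theorem material_derivative_symbol (d : ℕ) (α : ℝ) (hα0 : 0 < α) (hα1 : α < 1)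
    (Λ : Measure (Metric.sphere (0 : EuclideanSpace ℝ (Fin d)) 1))
    [IsProbabilityMeasure Λ]
    (s : ℝ) (hs : 0 < s) (k : EuclideanSpace ℝ (Fin d)) :
    (∀ u : Metric.sphere (0 : EuclideanSpace ℝ (Fin d)) 1,
      IntegrableOn
        (fun t : ℝ => (1 - Complex.exp ((Complex.I * ((inner ℝ k (u : EuclideanSpace ℝ (Fin d)) : ℝ) : ℂ) - (s : ℂ)) * t)) *
          ((α / Real.Gamma (1 - α) * t ^ (-α - 1) : ℝ) : ℂ))
        (Ioi (0:ℝ))) ∧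
    Integrable (fun u : Metric.sphere (0 : EuclideanSpace ℝ (Fin d)) 1 =>
      ∫ t in Ioi (0:ℝ),
        (1 - Complex.exp ((Complex.I * ((inner ℝ k (u : EuclideanSpace ℝ (Fin d)) : ℝ) : ℂ) - (s : ℂ)) * t)) *
          ((α / Real.Gamma (1 - α) * t ^ (-α - 1) : ℝ) : ℂ)) Λ ∧
    Integrable (fun u : Metric.sphere (0 : EuclideanSpace ℝ (Fin d)) 1 =>
      ((s : ℂ) - Complex.I * ((inner ℝ k (u : EuclideanSpace ℝ (Fin d)) : ℝ) : ℂ)) ^ (α : ℂ)) Λ ∧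
    (∫ u : Metric.sphere (0 : EuclideanSpace ℝ (Fin d)) 1,
        (∫ t in Ioi (0:ℝ),
          (1 - Complex.exp ((Complex.I * ((inner ℝ k (u : EuclideanSpace ℝ (Fin d)) : ℝ) : ℂ) - (s : ℂ)) * t)) *
            ((α / Real.Gamma (1 - α) * t ^ (-α - 1) : ℝ) : ℂ)) ∂Λ)
      = ∫ u : Metric.sphere (0 : EuclideanSpace ℝ (Fin d)) 1,
          ((s : ℂ) - Complex.I * ((inner ℝ k (u : EuclideanSpace ℝ (Fin d)) : ℝ) : ℂ)) ^ (α : ℂ) ∂Λ := by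
  have hzre : ∀ u : Metric.sphere (0 : EuclideanSpace ℝ (Fin d)) 1,
      (0:ℝ) < ((s : ℂ) - Complex.I * ((inner ℝ k (u : EuclideanSpace ℝ (Fin d)) : ℝ) : ℂ)).re := by
    intro u
    simp [Complex.sub_re, Complex.mul_re, hs]
  have hexp : ∀ u : Metric.sphere (0 : EuclideanSpace ℝ (Fin d)) 1, ∀ t : ℝ,
      (Complex.I * ((inner ℝ k (u : EuclideanSpace ℝ (Fin d)) : ℝ) : ℂ) - (s : ℂ)) * t
        = -((s : ℂ) - Complex.I * ((inner ℝ k (u : EuclideanSpace ℝ (Fin d)) : ℝ) : ℂ)) * t := by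
    intro u t; ring
  -- part 1
  have h1 : ∀ u : Metric.sphere (0 : EuclideanSpace ℝ (Fin d)) 1,
      IntegrableOn
        (fun t : ℝ => (1 - Complex.exp ((Complex.I * ((inner ℝ k (u : EuclideanSpace ℝ (Fin d)) : ℝ) : ℂ) - (s : ℂ)) * t)) *
          ((α / Real.Gamma (1 - α) * t ^ (-α - 1) : ℝ) : ℂ))
        (Ioi (0:ℝ)) := by
    intro u
    have := integrableOn_main hα0 hα1 (hzre u) (α / Real.Gamma (1 - α))
    apply this.congr
    filter_upwards with t
    rw [hexp u t]
  -- inner value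
  have hval : ∀ u : Metric.sphere (0 : EuclideanSpace ℝ (Fin d)) 1,
      (∫ t in Ioi (0:ℝ),
        (1 - Complex.exp ((Complex.I * ((inner ℝ k (u : EuclideanSpace ℝ (Fin d)) : ℝ) : ℂ) - (s : ℂ)) * t)) *
          ((α / Real.Gamma (1 - α) * t ^ (-α - 1) : ℝ) : ℂ))
        = ((s : ℂ) - Complex.I * ((inner ℝ k (u : EuclideanSpace ℝ (Fin d)) : ℝ) : ℂ)) ^ (α : ℂ) := by
    intro u
    rw [← inner_eq hα0 hα1 (hzre u)]
    refine setIntegral_congr_fun measurableSet_Ioi (fun t ht => ?_)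
    rw [hexp u t]
  -- integrability of the cpow function
  have h3 : Integrable (fun u : Metric.sphere (0 : EuclideanSpace ℝ (Fin d)) 1 =>
      ((s : ℂ) - Complex.I * ((inner ℝ k (u : EuclideanSpace ℝ (Fin d)) : ℝ) : ℂ)) ^ (α : ℂ)) Λ := by
    have hcont : Continuous fun u : Metric.sphere (0 : EuclideanSpace ℝ (Fin d)) 1 =>
        ((s : ℂ) - Complex.I * ((inner ℝ k (u : EuclideanSpace ℝ (Fin d)) : ℝ) : ℂ)) := by
      apply continuous_const.sub
      apply continuous_const.mul
      exact Complex.continuous_ofReal.comp (continuous_const.inner continuous_subtype_val)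
    have hcpow : Continuous fun u : Metric.sphere (0 : EuclideanSpace ℝ (Fin d)) 1 =>
        ((s : ℂ) - Complex.I * ((inner ℝ k (u : EuclideanSpace ℝ (Fin d)) : ℝ) : ℂ)) ^ (α : ℂ) := by
      rw [continuous_iff_continuousAt]
      intro u
      exact ContinuousAt.cpow hcont.continuousAt continuousAt_const
        (Complex.mem_slitPlane_iff.mpr (Or.inl (hzre u)))
    refine Integrable.mono' (integrable_const ((s + ‖k‖) ^ α)) hcpow.aestronglyMeasurable ?_
    filter_upwards with u
    have hzne : ((s : ℂ) - Complex.I * ((inner ℝ k (u : EuclideanSpace ℝ (Fin d)) : ℝ) : ℂ)) ≠ 0 := by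
      intro h
      have := hzre u
      rw [h] at this
      simp at this
    rw [Complex.norm_cpow_of_ne_zero hzne]
    simp only [Complex.ofReal_re, Complex.ofReal_im, mul_zero, Real.exp_zero, div_one]
    apply Real.rpow_le_rpow (norm_nonneg _) _ hα0.le
    have hnu : ‖(u : EuclideanSpace ℝ (Fin d))‖ = 1 := norm_eq_of_mem_sphere u
    have hinner : |(inner ℝ k (u : EuclideanSpace ℝ (Fin d)) : ℝ)| ≤ ‖k‖ := by
      calc |(inner ℝ k (u : EuclideanSpace ℝ (Fin d)) : ℝ)| ≤ ‖k‖ * ‖(u : EuclideanSpace ℝ (Fin d))‖ := abs_real_inner_le_norm k (u : EuclideanSpace ℝ (Fin d))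
      _ = ‖k‖ := by rw [hnu, mul_one]
    calc ‖(s : ℂ) - Complex.I * ((inner ℝ k (u : EuclideanSpace ℝ (Fin d)) : ℝ) : ℂ)‖
        ≤ ‖(s : ℂ)‖ + ‖Complex.I * ((inner ℝ k (u : EuclideanSpace ℝ (Fin d)) : ℝ) : ℂ)‖ := by
          apply norm_sub_le
    _ = s + |(inner ℝ k (u : EuclideanSpace ℝ (Fin d)) : ℝ)| := by
          rw [norm_mul, Complex.norm_I, one_mul, Complex.norm_real, Complex.norm_real,
            Real.norm_eq_abs, Real.norm_eq_abs, abs_of_pos hs]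
    _ ≤ s + ‖k‖ := by linarith
  have h2 : Integrable (fun u : Metric.sphere (0 : EuclideanSpace ℝ (Fin d)) 1 =>
      ∫ t in Ioi (0:ℝ),
        (1 - Complex.exp ((Complex.I * ((inner ℝ k (u : EuclideanSpace ℝ (Fin d)) : ℝ) : ℂ) - (s : ℂ)) * t)) *
          ((α / Real.Gamma (1 - α) * t ^ (-α - 1) : ℝ) : ℂ)) Λ := by
    apply h3.congr
    filter_upwards with u
    exact (hval u).symm
  refine ⟨h1, h2, h3, ?_⟩
  exact integral_congr_ae (Filter.Eventually.of_forall hval)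
end

section
/- Let γ > 0 and let p : (0,1) → ℝ be a measurable probability density on (0,1) (p ≥ 0 and ∫₀¹ p(β) dβ = 1) that is strictly positive on some interval (0,ε) and regularly varying at zero with exponent γ−1, i.e., for every λ > 0, lim_{x→0⁺} p(λx)/p(x) = λ^{γ−1}. Define Ψ(t) = ∫₀¹ t^{−β} p(β) dβ for t > 0. Then Ψ is slowly varying at infinity: for every λ > 0, lim_{t→∞} Ψ(λt)/Ψ(t) = 1. (Hence the tail of the distributed-order waiting time distribution decays slower than any power of t, giving rise to ultraslow diffusion.) -/
open MeasureTheory Filter Set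

set_option maxHeartbeats 1000000

/-- Let `p` be a probability density on `(0,1)` which is strictly
positive on some interval `(0,ε)` and regularly varying at zero with exponent `γ−1`
(`γ > 0`), i.e. `p (l·x)/p x → l^(γ−1)` as `x → 0⁺` for every `l > 0`. Then
`Ψ t = ∫₀¹ t^(−β) p β dβ` is slowly varying at infinity:
`Ψ (l·t)/Ψ t → 1` as `t → ∞` for every `l > 0`. -/
theorem distributed_order_tail_slowly_varying (γ : ℝ) (hγ : 0 < γ)
    (p : ℝ → ℝ) (hpmeas : Measurable p)
    (hp0 : ∀ β ∈ Ioo (0:ℝ) 1, 0 ≤ p β)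
    (hp1 : ∫ β in Ioo (0:ℝ) 1, p β = 1)
    (hppos : ∃ ε > 0, ∀ x ∈ Ioo (0:ℝ) ε, 0 < p x)
    (hreg : ∀ l : ℝ, 0 < l →
      Tendsto (fun x : ℝ => p (l * x) / p x) (nhdsWithin 0 (Ioi (0:ℝ))) (nhds (l ^ (γ - 1))))
    (Ψ : ℝ → ℝ) (hΨ : ∀ t, Ψ t = ∫ β in Ioo (0:ℝ) 1, t ^ (-β) * p β) :
    ∀ l : ℝ, 0 < l → Tendsto (fun t : ℝ => Ψ (l * t) / Ψ t) atTop (nhds 1) := by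
  obtain ⟨ε₀, hε₀, hppos⟩ := hppos
  have hpInt : IntegrableOn p (Ioo 0 1) := by
    by_contra h
    rw [MeasureTheory.integral_undef h] at hp1; norm_num at hp1
  -- measurability of the integrand
  have hmeas : ∀ s : ℝ, 0 < s → Measurable (fun β : ℝ => s ^ (-β) * p β) := by
    intro s hs
    have h1 : (fun β : ℝ => s ^ (-β)) = fun β : ℝ => Real.exp (Real.log s * (-β)) := by
      funext β; rw [Real.rpow_def_of_pos hs]
    exact ((h1 ▸ (Real.continuous_exp.comp
      (continuous_const.mul continuous_neg)).measurable : Measurable fun β : ℝ => s ^ (-β))).mul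
      hpmeas
  -- integrability of the integrand for s ≥ 1
  have hInt : ∀ s : ℝ, 1 ≤ s → IntegrableOn (fun β : ℝ => s ^ (-β) * p β) (Ioo 0 1) := by
    intro s hs
    refine Integrable.mono hpInt ((hmeas s (lt_of_lt_of_le one_pos hs)).aestronglyMeasurable) ?_
    filter_upwards [ae_restrict_mem measurableSet_Ioo] with β hβ
    have h1 : s ^ (-β) ≤ 1 := Real.rpow_le_one_of_one_le_of_nonpos hs (by linarith [hβ.1])
    have h2 : 0 ≤ s ^ (-β) := Real.rpow_nonneg (by linarith) _
    have h3 : 0 ≤ p β := hp0 β hβ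
    rw [Real.norm_eq_abs, Real.norm_eq_abs, abs_of_nonneg (mul_nonneg h2 h3), abs_of_nonneg h3]
    calc s ^ (-β) * p β ≤ 1 * p β := mul_le_mul_of_nonneg_right h1 h3
      _ = p β := one_mul _
  intro l hl
  rw [Metric.tendsto_atTop]
  intro ε hε
  set M : ℝ := max 1 l⁻¹ with hM
  have hM1 : 1 ≤ M := le_max_left _ _
  have hMge2 : l⁻¹ ≤ M := le_max_right _ _
  clear_value M
  -- choose δ
  have hcont : Tendsto (fun x : ℝ => l ^ (-x)) (nhds 0) (nhds 1) := by
    have h1 : (fun x : ℝ => l ^ (-x)) = fun x : ℝ => Real.exp (Real.log l * (-x)) := by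
      funext x; rw [Real.rpow_def_of_pos hl]
    rw [h1]
    have : Tendsto (fun x : ℝ => Real.log l * (-x)) (nhds 0) (nhds 0) := by
      have := (continuous_const.mul continuous_neg : Continuous fun x : ℝ => Real.log l * (-x))
      have h : Tendsto (fun x : ℝ => Real.log l * (-x)) (nhds 0) (nhds (Real.log l * -0)) :=
        this.tendsto 0
      rwa [neg_zero, mul_zero] at h
    have h := (Real.continuous_exp.tendsto 0).comp this
    rw [Real.exp_zero] at h
    exact h
  have hδ0 : ∀ᶠ x : ℝ in nhds 0, |l ^ (-x) - 1| < ε / 4 := by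
    have := hcont (Metric.ball_mem_nhds (1:ℝ) (by positivity : (0:ℝ) < ε/4))
    filter_upwards [this] with x hx
    simpa [Real.dist_eq] using hx
  obtain ⟨δ₀, hδ₀, hδball⟩ := Metric.eventually_nhds_iff.1 hδ0
  set δ : ℝ := min (min (δ₀ / 2) (1 / 2)) ε₀ with hδdef
  have hδpos : 0 < δ := by positivity
  have hδ1 : δ < 1 := lt_of_le_of_lt (le_trans (min_le_left _ _) (min_le_right _ _)) (by norm_num)
  have hδε₀ : δ ≤ ε₀ := min_le_right _ _
  have hδsmall : |l ^ (-δ) - 1| < ε / 4 := by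
    apply hδball
    rw [Real.dist_eq, sub_zero, abs_of_pos hδpos]
    calc δ ≤ δ₀ / 2 := le_trans (min_le_left _ _) (min_le_left _ _)
    _ < δ₀ := by linarith
  set cδ : ℝ := min 1 (l ^ (-δ)) with hcδ
  set Cδ : ℝ := max 1 (l ^ (-δ)) with hCδ
  have hcδ1 : 1 - ε / 4 < cδ := by
    rcases abs_lt.1 hδsmall with ⟨h1, _⟩
    rcases min_cases 1 (l ^ (-δ)) with h | h <;> rw [hcδ, h.1] <;> linarith
  have hCδ1 : Cδ < 1 + ε / 4 := by
    rcases abs_lt.1 hδsmall with ⟨_, h2⟩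
    rcases max_cases 1 (l ^ (-δ)) with h | h <;> rw [hCδ, h.1] <;> linarith
  have hcδpos : 0 < cδ := lt_min one_pos (Real.rpow_pos_of_pos hl _)
  have hCδpos : 0 < Cδ := lt_of_lt_of_le one_pos (le_max_left _ _)
  have hcδle1 : cδ ≤ 1 := min_le_left _ _
  have hcδle2 : cδ ≤ l ^ (-δ) := min_le_right _ _
  have hCδge1 : 1 ≤ Cδ := le_max_left _ _
  have hCδge2 : l ^ (-δ) ≤ Cδ := le_max_right _ _
  clear_value cδ Cδ
  -- the mass near zero
  set c : ℝ := ∫ β in Ioo 0 (δ / 2), p β with hc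
  have hpInt2 : IntegrableOn p (Ioo 0 (δ / 2)) :=
    hpInt.mono_set (Ioo_subset_Ioo le_rfl (by linarith))
  have hcpos0 : 0 < c := by
    have hnn : 0 ≤ᶠ[ae (volume.restrict (Ioo 0 (δ / 2)))] p := by
      filter_upwards [ae_restrict_mem measurableSet_Ioo] with β hβ
      exact hp0 β (Ioo_subset_Ioo le_rfl (by linarith) hβ)
    rw [hc, setIntegral_pos_iff_support_of_nonneg_ae hnn hpInt2]
    have hsub : Ioo 0 (δ / 2) ⊆ Function.support p ∩ Ioo 0 (δ / 2) := by
      intro x hx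
      refine ⟨?_, hx⟩
      have := hppos x (Ioo_subset_Ioo le_rfl (by linarith) hx)
      exact Function.mem_support.2 (ne_of_gt this)
    calc (0:ENNReal) < volume (Ioo 0 (δ / 2)) := by
            rw [Real.volume_Ioo]; simp [ENNReal.ofReal_pos]; linarith
      _ ≤ volume (Function.support p ∩ Ioo 0 (δ / 2)) := measure_mono hsub
  have hcpos : 0 < c := hcpos0
  clear_value c
  set η : ℝ := ε / (4 * (M + 1)) with hη
  have hMpos : (0:ℝ) < 4 * (M + 1) := by linarith
  have hηpos : 0 < η := by rw [hη]; positivity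
  clear_value η
  have hη8 : 8 * η ≤ ε := by
    rw [hη, mul_div_assoc', div_le_iff₀ hMpos]
    nlinarith only [hε, hM1, mul_nonneg (le_of_lt hε) (by linarith : (0:ℝ) ≤ M - 1)]
  -- choose T
  have htail : Tendsto (fun t : ℝ => t ^ (-(δ / 2))) atTop (nhds 0) :=
    tendsto_rpow_neg_atTop (by positivity)
  have hev : ∀ᶠ t : ℝ in atTop, t ^ (-(δ / 2)) < η * c := by
    have := htail (Metric.ball_mem_nhds (0:ℝ) (mul_pos hηpos hcpos))
    filter_upwards [this] with t ht
    have := (abs_lt.1 (by simpa [Real.dist_eq] using ht)).2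
    linarith
  obtain ⟨T, hT⟩ := eventually_atTop.1 hev
  refine ⟨max (max T 1) (1 / l), ?_⟩
  intro t ht
  have ht1 : 1 ≤ t := le_trans (le_trans (le_max_right T 1) (le_max_left _ _)) ht
  have htpos : 0 < t := lt_of_lt_of_le one_pos ht1
  have hlt1 : 1 ≤ l * t := by
    have h1 : 1 / l ≤ t := le_trans (le_max_right _ _) ht
    rw [div_le_iff₀ hl] at h1
    calc (1:ℝ) ≤ t * l := h1
    _ = l * t := mul_comm t l
  have hltpos : 0 < l * t := lt_of_lt_of_le one_pos hlt1
  have htT : T ≤ t := le_trans (le_trans (le_max_left T 1) (le_max_left _ _)) ht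
  have htsmall : t ^ (-(δ / 2)) < η * c := hT t htT
  -- set integrals
  set A : ℝ := ∫ β in Ioo 0 δ, t ^ (-β) * p β with hA
  set B : ℝ := ∫ β in Ico δ 1, t ^ (-β) * p β with hB
  set A' : ℝ := ∫ β in Ioo 0 δ, (l * t) ^ (-β) * p β with hA'
  set B' : ℝ := ∫ β in Ico δ 1, (l * t) ^ (-β) * p β with hB'
  clear_value A B A' B'
  have hIooIco : Ioo (0:ℝ) δ ∪ Ico δ 1 = Ioo 0 1 := Ioo_union_Ico_eq_Ioo hδpos (le_of_lt hδ1)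
  have hdisj : Disjoint (Ioo (0:ℝ) δ) (Ico δ 1) := by
    rw [Set.disjoint_left]; intro x hx hx'; exact absurd hx.2 (not_lt.2 hx'.1)
  have hsub1 : Ioo (0:ℝ) δ ⊆ Ioo 0 1 := Ioo_subset_Ioo le_rfl (le_of_lt hδ1)
  have hsub2 : Ico δ 1 ⊆ Ioo (0:ℝ) 1 := fun x hx => ⟨lt_of_lt_of_le hδpos hx.1, hx.2⟩
  have hsplit : Ψ t = A + B := by
    rw [hΨ, ← hIooIco,
      setIntegral_union hdisj measurableSet_Ico ((hInt t ht1).mono_set hsub1)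
        ((hInt t ht1).mono_set hsub2), hA, hB]
  have hsplit' : Ψ (l * t) = A' + B' := by
    rw [hΨ, ← hIooIco,
      setIntegral_union hdisj measurableSet_Ico ((hInt (l*t) hlt1).mono_set hsub1)
        ((hInt (l*t) hlt1).mono_set hsub2), hA', hB']
  -- nonnegativity
  have hnonneg : ∀ s : ℝ, 0 < s → ∀ β ∈ Ioo (0:ℝ) 1, 0 ≤ s ^ (-β) * p β := by
    intro s hs β hβ
    exact mul_nonneg (Real.rpow_nonneg (le_of_lt hs) _) (hp0 β hβ)
  have hBnn : 0 ≤ B := by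
    rw [hB]
    apply setIntegral_nonneg measurableSet_Ico
    intro β hβ; exact hnonneg t htpos β (hsub2 hβ)
  have hB'nn : 0 ≤ B' := by
    rw [hB']
    apply setIntegral_nonneg measurableSet_Ico
    intro β hβ; exact hnonneg (l*t) hltpos β (hsub2 hβ)
  -- lower bound for A
  have hAlb : t ^ (-(δ/2)) * c ≤ A := by
    have step1 : t ^ (-(δ/2)) * c = ∫ β in Ioo 0 (δ/2), t ^ (-(δ/2)) * p β := by
      rw [hc, ← integral_const_mul]
    rw [hA, step1]
    have hsub3 : Ioo (0:ℝ) (δ/2) ⊆ Ioo 0 δ := Ioo_subset_Ioo le_rfl (by linarith)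
    calc ∫ β in Ioo 0 (δ/2), t ^ (-(δ/2)) * p β
        ≤ ∫ β in Ioo 0 (δ/2), t ^ (-β) * p β := by
          apply setIntegral_mono_on
          · exact (hpInt2.const_mul _)
          · exact (hInt t ht1).mono_set (fun x hx => hsub1 (hsub3 hx))
          · exact measurableSet_Ioo
          · intro β hβ
            have h1 : t ^ (-(δ/2)) ≤ t ^ (-β) :=
              Real.rpow_le_rpow_of_exponent_le ht1 (by linarith [hβ.2])
            have h2 : 0 ≤ p β := hp0 β (hsub1 (hsub3 hβ))
            exact mul_le_mul_of_nonneg_right h1 h2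
      _ ≤ ∫ β in Ioo 0 δ, t ^ (-β) * p β := by
          apply setIntegral_mono_set ((hInt t ht1).mono_set hsub1)
          · filter_upwards [ae_restrict_mem measurableSet_Ioo] with β hβ
            exact hnonneg t htpos β (hsub1 hβ)
          · exact HasSubset.Subset.eventuallyLE hsub3
  have hApos : 0 < A :=
    lt_of_lt_of_le (mul_pos (Real.rpow_pos_of_pos htpos _) hcpos) hAlb
  -- upper bound for B
  have hBub : B ≤ η * A := by
    have step1 : B ≤ t ^ (-δ) := by
      have : B ≤ ∫ β in Ico δ 1, t ^ (-δ) * p β := by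
        rw [hB]
        apply setIntegral_mono_on
        · exact (hInt t ht1).mono_set hsub2
        · exact (hpInt.mono_set hsub2).const_mul _
        · exact measurableSet_Ico
        · intro β hβ
          have h1 : t ^ (-β) ≤ t ^ (-δ) :=
            Real.rpow_le_rpow_of_exponent_le ht1 (by linarith [hβ.1])
          have h2 : 0 ≤ p β := hp0 β (hsub2 hβ)
          exact mul_le_mul_of_nonneg_right h1 h2
      rw [integral_const_mul] at this
      have h3 : ∫ β in Ico δ 1, p β ≤ 1 := by
        have h3' : ∫ β in Ico δ 1, p β ≤ ∫ β in Ioo (0:ℝ) 1, p β := by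
          apply setIntegral_mono_set hpInt
          · filter_upwards [ae_restrict_mem measurableSet_Ioo] with β hβ using hp0 β hβ
          · exact HasSubset.Subset.eventuallyLE hsub2
        rw [hp1] at h3'
        exact h3'
      have h4 : 0 < t ^ (-δ) := Real.rpow_pos_of_pos htpos _
      calc B ≤ t ^ (-δ) * ∫ β in Ico δ 1, p β := this
        _ ≤ t ^ (-δ) * 1 := mul_le_mul_of_nonneg_left h3 (le_of_lt h4)
        _ = t ^ (-δ) := mul_one _
    have step2 : t ^ (-δ) ≤ η * (t ^ (-(δ/2)) * c) := by
      have h1 : t ^ (-δ) = t ^ (-(δ/2)) * t ^ (-(δ/2)) := by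
        rw [← Real.rpow_add htpos]; ring_nf
      have h2 : 0 < t ^ (-(δ/2)) := Real.rpow_pos_of_pos htpos _
      rw [h1]
      calc t ^ (-(δ/2)) * t ^ (-(δ/2)) ≤ t ^ (-(δ/2)) * (η * c) :=
            mul_le_mul_of_nonneg_left (le_of_lt htsmall) (le_of_lt h2)
        _ = η * (t ^ (-(δ/2)) * c) := by ring
    calc B ≤ t ^ (-δ) := step1
      _ ≤ η * (t ^ (-(δ/2)) * c) := step2
      _ ≤ η * A := mul_le_mul_of_nonneg_left hAlb (le_of_lt hηpos)
  -- bounds relating A' to A and B' to B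
  have hA'lb : cδ * A ≤ A' := by
    rw [hA', hA, ← integral_const_mul]
    apply setIntegral_mono_on
    · exact ((hInt t ht1).mono_set hsub1).const_mul _
    · exact (hInt (l*t) hlt1).mono_set hsub1
    · exact measurableSet_Ioo
    · intro β hβ
      have hfac : (l * t) ^ (-β) = l ^ (-β) * t ^ (-β) :=
        Real.mul_rpow (le_of_lt hl) (le_of_lt htpos)
      have hlb : cδ ≤ l ^ (-β) := by
        rcases le_or_gt 1 l with h | h
        · exact le_trans hcδle2
            (Real.rpow_le_rpow_of_exponent_le h (by linarith [hβ.2]))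
        · refine le_trans hcδle1 ?_
          have := Real.rpow_le_rpow_of_exponent_ge hl (le_of_lt h)
            (by linarith [hβ.1] : -β ≤ 0)
          simpa using this
      have h2 : 0 ≤ p β := hp0 β (hsub1 hβ)
      have h3 : 0 ≤ t ^ (-β) := Real.rpow_nonneg (le_of_lt htpos) _
      calc cδ * (t ^ (-β) * p β) ≤ l ^ (-β) * (t ^ (-β) * p β) :=
            mul_le_mul_of_nonneg_right hlb (mul_nonneg h3 h2)
        _ = (l * t) ^ (-β) * p β := by rw [hfac]; ring
  have hA'ub : A' ≤ Cδ * A := by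
    rw [hA', hA, ← integral_const_mul]
    apply setIntegral_mono_on
    · exact (hInt (l*t) hlt1).mono_set hsub1
    · exact ((hInt t ht1).mono_set hsub1).const_mul _
    · exact measurableSet_Ioo
    · intro β hβ
      have hfac : (l * t) ^ (-β) = l ^ (-β) * t ^ (-β) :=
        Real.mul_rpow (le_of_lt hl) (le_of_lt htpos)
      have hub : l ^ (-β) ≤ Cδ := by
        rcases le_or_gt 1 l with h | h
        · exact le_trans (Real.rpow_le_one_of_one_le_of_nonpos h (by linarith [hβ.1]))
            hCδge1
        · exact le_trans (Real.rpow_le_rpow_of_exponent_ge hl (le_of_lt h)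
            (by linarith [hβ.2] : -δ ≤ -β)) hCδge2
      have h2 : 0 ≤ p β := hp0 β (hsub1 hβ)
      have h3 : 0 ≤ t ^ (-β) := Real.rpow_nonneg (le_of_lt htpos) _
      calc (l * t) ^ (-β) * p β = l ^ (-β) * (t ^ (-β) * p β) := by rw [hfac]; ring
        _ ≤ Cδ * (t ^ (-β) * p β) :=
            mul_le_mul_of_nonneg_right hub (mul_nonneg h3 h2)
  have hB'ub : B' ≤ M * B := by
    rw [hB', hB, ← integral_const_mul]
    apply setIntegral_mono_on
    · exact (hInt (l*t) hlt1).mono_set hsub2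
    · exact ((hInt t ht1).mono_set hsub2).const_mul _
    · exact measurableSet_Ico
    · intro β hβ
      have hfac : (l * t) ^ (-β) = l ^ (-β) * t ^ (-β) :=
        Real.mul_rpow (le_of_lt hl) (le_of_lt htpos)
      have hβ' := hsub2 hβ
      have hub : l ^ (-β) ≤ M := by
        rcases le_or_gt 1 l with h | h
        · exact le_trans (Real.rpow_le_one_of_one_le_of_nonpos h (by linarith [hβ'.1]))
            hM1
        · refine le_trans ?_ hMge2
          have := Real.rpow_le_rpow_of_exponent_ge hl (le_of_lt h)
            (by linarith [hβ'.2] : (-1:ℝ) ≤ -β)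
          simpa [Real.rpow_neg_one] using this
      have h2 : 0 ≤ p β := hp0 β hβ'
      have h3 : 0 ≤ t ^ (-β) := Real.rpow_nonneg (le_of_lt htpos) _
      calc (l * t) ^ (-β) * p β = l ^ (-β) * (t ^ (-β) * p β) := by rw [hfac]; ring
        _ ≤ M * (t ^ (-β) * p β) :=
            mul_le_mul_of_nonneg_right hub (mul_nonneg h3 h2)
  -- final estimates
  have hΨt : 0 < Ψ t := by rw [hsplit]; linarith
  have hratio_ub : Ψ (l * t) / Ψ t ≤ Cδ + M * η := by
    rw [hsplit, hsplit']
    have hnum : A' + B' ≤ (Cδ + M * η) * A := by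
      have hB'2 : B' ≤ M * (η * A) :=
        le_trans hB'ub (mul_le_mul_of_nonneg_left hBub (by linarith : (0:ℝ) ≤ M))
      calc A' + B' ≤ Cδ * A + M * (η * A) := add_le_add hA'ub hB'2
        _ = (Cδ + M * η) * A := by ring
    have hnn2 : 0 ≤ (Cδ + M * η) * A := by
      apply mul_nonneg ?_ (le_of_lt hApos)
      have : 0 ≤ M * η := mul_nonneg (by linarith) (le_of_lt hηpos)
      linarith
    calc (A' + B') / (A + B) ≤ ((Cδ + M * η) * A) / A :=
          div_le_div₀ hnn2 hnum hApos (by linarith)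
      _ = Cδ + M * η := mul_div_cancel_right₀ _ (ne_of_gt hApos)
  have hratio_lb : cδ / (1 + η) ≤ Ψ (l * t) / Ψ t := by
    rw [hsplit, hsplit']
    have hden : A + B ≤ (1 + η) * A := by
      calc A + B ≤ A + η * A := by linarith
        _ = (1 + η) * A := by ring
    have hcA : 0 ≤ cδ * A := mul_nonneg (le_of_lt hcδpos) (le_of_lt hApos)
    calc cδ / (1 + η) = (cδ * A) / ((1 + η) * A) := by
          rw [mul_div_mul_right _ _ (ne_of_gt hApos)]
      _ ≤ (A' + B') / (A + B) :=
          div_le_div₀ (by linarith) (by linarith) (by linarith) hden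
  -- conclude
  rw [Real.dist_eq, abs_lt]
  constructor
  · have h1 : 1 - ε < cδ / (1 + η) := by
      rw [lt_div_iff₀ (by linarith : (0:ℝ) < 1 + η)]
      nlinarith only [hcδ1, hηpos, hε, hη8, mul_nonneg (le_of_lt hε) (le_of_lt hηpos)]
    linarith
  · have h2 : Cδ + M * η < 1 + ε := by
      have hMη : M * η ≤ ε / 4 := by
        rw [hη, ← mul_div_assoc]
        rw [div_le_div_iff₀ hMpos (by norm_num)]
        nlinarith only [hε, hM1, mul_nonneg (le_of_lt hε) (by linarith : (0:ℝ) ≤ M - 1)]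
      linarith
    linarith
end
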